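/- arXiv:2009.06597 — 5 statements merged into one kernel-verified Lean document; each statement's English description precedes it below -/
import Mathlib

section
/- The formal power series identity (-q;q^2)_\infty^2 (q^2;q^2)_\infty = \sum_{n=-\infty}^{\infty} q^{n^2} holds (a specialization of the Jacobi triple product). -/
open PowerSeries Finset

/-- Formal infinite product of power series `F 0 * F 1 * ⋯`, well defined when
`F k ≡ 1 (mod X^(k+1))`: the coefficient of `X^n` is that of the partial product
of the first `n+1` factors. -/
noncomputable def iProd (F : ℕ → PowerSeries ℚ) : PowerSeries ℚ :=
  PowerSeries.mk fun n => PowerSeries.coeff n (∏ k ∈ Finset.range (n + 1), F k)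

/-- `(-q; q)_∞ = ∏_{k≥1} (1 + q^k)` -/
noncomputable def P₁ : PowerSeries ℚ := iProd fun k => 1 + (X : PowerSeries ℚ) ^ (k + 1)
/-- `(q; q)_∞ = ∏_{k≥1} (1 - q^k)` -/
noncomputable def P₂ : PowerSeries ℚ := iProd fun k => 1 - (X : PowerSeries ℚ) ^ (k + 1)
/-- `(-q²; q²)_∞ = ∏_{k≥1} (1 + q^{2k})` -/
noncomputable def P₃ : PowerSeries ℚ := iProd fun k => 1 + (X : PowerSeries ℚ) ^ (2 * k + 2)
/-- `(q²; q²)_∞ = ∏_{k≥1} (1 - q^{2k})` -/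
noncomputable def P₄ : PowerSeries ℚ := iProd fun k => 1 - (X : PowerSeries ℚ) ^ (2 * k + 2)
/-- `(-q; q²)_∞ = ∏_{k≥0} (1 + q^{2k+1})` -/
noncomputable def P₅ : PowerSeries ℚ := iProd fun k => 1 + (X : PowerSeries ℚ) ^ (2 * k + 1)
/-- `(q; q²)_∞ = ∏_{k≥0} (1 - q^{2k+1})` -/
noncomputable def P₆ : PowerSeries ℚ := iProd fun k => 1 - (X : PowerSeries ℚ) ^ (2 * k + 1)

/-- The Jacobi theta series `∑_{n ∈ ℤ} q^{n²}`. -/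
noncomputable def theta : PowerSeries ℚ :=
  PowerSeries.mk fun m => ∑ᶠ n : ℤ, if n ^ 2 = (m : ℤ) then (1 : ℚ) else 0

/-- The signed theta series `∑_{n ∈ ℤ} (-1)^n q^{n²}`. -/
noncomputable def thetaSigned : PowerSeries ℚ :=
  PowerSeries.mk fun m => ∑ᶠ n : ℤ, if n ^ 2 = (m : ℤ) then ((-1 : ℚ) ^ n) else 0

namespace JTP

noncomputable section

/-- Gaussian binomial `[m, j]` in the variable `q = X^2`, as a power series. -/
def gb : ℕ → ℕ → PowerSeries ℚ
  | 0, 0 => 1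
  | 0, _+1 => 0
  | _+1, 0 => 1
  | m+1, j+1 => gb m (j+1) + X ^ (2*(m-j)) * gb m j

lemma gb_zero (m : ℕ) : gb m 0 = 1 := by cases m <;> rfl

lemma gb_of_lt : ∀ {m j : ℕ}, m < j → gb m j = 0
  | 0, _+1, _ => rfl
  | m+1, j+1, h => by
      have h1 : m < j + 1 := by omega
      have h2 : m < j := by omega
      simp [gb, gb_of_lt h1, gb_of_lt h2]

/-- partial product `∏_{k=1}^{r} (1 - q^{2k})` -/
def d (r : ℕ) : PowerSeries ℚ := ∏ k ∈ range r, (1 - X ^ (2*k+2))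

lemma d_ne_zero (r : ℕ) : d r ≠ 0 := by
  intro h
  have : constantCoeff (d r) = 1 := by
    simp [d, map_prod]
  rw [h] at this
  simp at this

/-- The q-binomial theorem (homogeneous form), by induction on `m`. -/
lemma key (m : ℕ) (a b : PowerSeries ℚ) :
    ∏ k ∈ range m, (b + a * X ^ (2*k+1)) =
      ∑ j ∈ range (m+1), X ^ (j^2) * gb m j * a ^ j * b ^ (m-j) := by
  induction m with
  | zero => simp [gb]
  | succ m ih =>
    rw [prod_range_succ, ih]
    have split : ∀ j ∈ range (m+2),
        X ^ (j^2) * gb (m+1) j * a ^ j * b ^ (m+1-j) =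
          (X ^ (j^2) * gb m j * a ^ j * b ^ (m-j)) * b +
          (if j = 0 then 0 else
            (X ^ ((j-1)^2) * gb m (j-1) * a ^ (j-1) * b ^ (m-(j-1))) * (a * X ^ (2*m+1))) := by
      intro j hj
      rw [mem_range] at hj
      match j with
      | 0 =>
        simp [gb_zero, pow_succ]
      | j+1 =>
        have hjle : j ≤ m := by omega
        simp only [if_neg (Nat.succ_ne_zero j), Nat.add_sub_cancel]
        show X ^ ((j+1)^2) * gb (m+1) (j+1) * a ^ (j+1) * b ^ (m+1-(j+1)) = _
        rw [show gb (m+1) (j+1) = gb m (j+1) + X ^ (2*(m-j)) * gb m j from rfl]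
        have e1 : m + 1 - (j + 1) = m - j := by omega
        rw [e1, mul_add, add_mul, add_mul]
        congr 1
        · rcases Nat.lt_or_ge m (j+1) with hlt | hge
          · rw [gb_of_lt hlt]
            ring
          · have e2 : m - j = (m - (j+1)) + 1 := by omega
            rw [e2, pow_succ]
            ring
        · have e3 : (j+1)^2 + 2*(m-j) = j^2 + (2*m+1) := by
            zify [hjle]; ring
          calc X ^ ((j+1)^2) * (X ^ (2*(m-j)) * gb m j) * a ^ (j+1) * b ^ (m-j)
              = X ^ ((j+1)^2 + 2*(m-j)) * gb m j * a ^ (j+1) * b ^ (m-j) := by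
                rw [pow_add]; ring
            _ = _ := by rw [e3, pow_add, pow_succ]; ring
    rw [sum_congr rfl split, sum_add_distrib, ← sum_mul]
    have h1 : ∑ j ∈ range (m+2), X ^ (j^2) * gb m j * a ^ j * b ^ (m-j) =
        ∑ j ∈ range (m+1), X ^ (j^2) * gb m j * a ^ j * b ^ (m-j) := by
      rw [sum_range_succ, gb_of_lt (by omega)]
      simp
    have h2 : ∑ j ∈ range (m+2), (if j = 0 then 0 else
        (X ^ ((j-1)^2) * gb m (j-1) * a ^ (j-1) * b ^ (m-(j-1))) * (a * X ^ (2*m+1))) =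
        (∑ j ∈ range (m+1), X ^ (j^2) * gb m j * a ^ j * b ^ (m-j)) * (a * X ^ (2*m+1)) := by
      rw [sum_range_succ' _ (m+1)]
      simp [sum_mul]
    rw [h1, h2]
    ring

/-- closed form: `gb m j * d j * d (m-j) = d m`. -/
lemma gbClosed : ∀ m j : ℕ, j ≤ m → gb m j * d j * d (m-j) = d m := by
  intro m
  induction m with
  | zero => intro j hj; interval_cases j; simp [gb, d]
  | succ m ih =>
    intro j hj
    match j with
    | 0 => simp [gb_zero, d]
    | j+1 =>
      have hjle : j ≤ m := by omega
      rw [show gb (m+1) (j+1) = gb m (j+1) + X ^ (2*(m-j)) * gb m j from rfl]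
      have hd : d (m+1) = d m * (1 - X ^ (2*m+2)) := by
        rw [d, prod_range_succ]; rfl
      rcases Nat.lt_or_ge m (j+1) with hlt | hge
      · -- j = m
        have : j = m := by omega
        subst this
        rw [gb_of_lt (by omega)]
        have h0 : j + 1 - (j + 1) = 0 := by omega
        have hdj : d (j+1) = d j * (1 - X ^ (2*j+2)) := by
          rw [d, prod_range_succ]; rfl
        rw [h0, hd]
        have := ih j le_rfl
        rw [Nat.sub_self] at this
        have hdd : d 0 = 1 := by simp [d]
        rw [hdd] at this
        rw [hdd]
        calc (0 + X ^ (2*(j-j)) * gb j j) * (d j * (1 - X ^ (2*j+2))) * 1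
            = gb j j * d j * 1 * (1 - X ^ (2*j+2)) := by
              rw [Nat.sub_self]; ring
          _ = d j * (1 - X ^ (2*j+2)) := by rw [this]
      · -- j+1 ≤ m
        have e2 : m - j = (m - (j+1)) + 1 := by omega
        have hdmj : d (m-j) = d (m-(j+1)) * (1 - X ^ (2*(m-(j+1))+2)) := by
          rw [e2, d, prod_range_succ]; rfl
        have e4 : 2*(m-(j+1))+2 = 2*(m-j) := by omega
        have hdj : d (j+1) = d j * (1 - X ^ (2*j+2)) := by
          rw [d, prod_range_succ]; rfl
        have e5 : m + 1 - (j+1) = m - j := by omega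
        have ih1 := ih (j+1) hge
        have ih2 := ih j hjle
        rw [e5, hd, add_mul, add_mul]
        have t1 : gb m (j+1) * d (j+1) * d (m-j) = d m * (1 - X ^ (2*(m-j))) := by
          rw [hdmj, e4, ← mul_assoc, ih1]
        have t2 : X ^ (2*(m-j)) * gb m j * d (j+1) * d (m-j) =
            X ^ (2*(m-j)) * (1 - X ^ (2*j+2)) * d m := by
          rw [hdj]
          calc X ^ (2*(m-j)) * gb m j * (d j * (1 - X ^ (2*j+2))) * d (m-j)
              = X ^ (2*(m-j)) * (1 - X ^ (2*j+2)) * (gb m j * d j * d (m-j)) := by ring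
            _ = _ := by rw [ih2]
        rw [t1, t2]
        have e6 : 2*(m-j) + (2*j+2) = 2*m+2 := by omega
        calc d m * (1 - X ^ (2*(m-j))) + X ^ (2*(m-j)) * (1 - X ^ (2*j+2)) * d m
            = d m * (1 - X ^ (2*(m-j)) * X ^ (2*j+2)) := by ring
          _ = d m * (1 - X ^ (2*m+2)) := by rw [← pow_add, e6]

lemma gb_symm (m j : ℕ) (hj : j ≤ m) : gb m j = gb m (m-j) := by
  have h1 := gbClosed m j hj
  have h2 := gbClosed m (m-j) (by omega)
  rw [show m - (m-j) = j by omega] at h2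
  have hne : d j * d (m-j) ≠ 0 := mul_ne_zero (d_ne_zero j) (d_ne_zero (m-j))
  have : gb m j * (d j * d (m-j)) = gb m (m-j) * (d j * d (m-j)) := by
    rw [← mul_assoc, h1, ← h2]; ring
  exact mul_right_cancel₀ hne this

/-- distance to `M` -/
def dd (M j : ℕ) : ℕ := if j ≤ M then M - j else j - M

lemma sum_odd (M : ℕ) : ∑ k ∈ range M, (2*k+1) = M^2 := by
  induction M with
  | zero => simp
  | succ M ih => rw [sum_range_succ, ih]; ring

/-- the finite Gauss identity `∏_{k<M} (1+q^{2k+1})² = ∑_{j=0}^{2M} q^{(j-M)²} [2M,j]_{q²}`. -/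
lemma star (M : ℕ) :
    (∏ k ∈ range M, (1 + X ^ (2*k+1) : PowerSeries ℚ)) ^ 2 =
      ∑ j ∈ range (2*M+1), X ^ ((dd M j)^2) * gb (2*M) j := by
  set Q : PowerSeries ℚ := ∏ k ∈ range M, (1 + X ^ (2*k+1)) with hQ
  have hk := key (2*M) 1 (X ^ (2*M))
  have hL : ∏ k ∈ range (2*M), ((X:PowerSeries ℚ) ^ (2*M) + 1 * X ^ (2*k+1)) =
      X ^ (3*M^2) * Q ^ 2 := by
    have hsplit := prod_range_add (fun k => (X:PowerSeries ℚ) ^ (2*M) + 1 * X ^ (2*k+1)) M M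
    rw [show M + M = 2*M by ring] at hsplit
    rw [hsplit]
    have h1 : ∏ k ∈ range M, ((X:PowerSeries ℚ) ^ (2*M) + 1 * X ^ (2*k+1)) =
        X ^ (M^2) * Q := by
      have : ∀ k ∈ range M, ((X:PowerSeries ℚ) ^ (2*M) + 1 * X ^ (2*k+1)) =
          X ^ (2*k+1) * (1 + X ^ (2*(M-1-k)+1)) := by
        intro k hk'
        rw [mem_range] at hk'
        have e : (2*k+1) + (2*(M-1-k)+1) = 2*M := by omega
        rw [mul_add, mul_one, ← pow_add, e, one_mul, add_comm]
      rw [prod_congr rfl this, prod_mul_distrib, prod_pow_eq_pow_sum, sum_odd]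
      congr 1
      exact prod_range_reflect (fun k => 1 + X ^ (2*k+1)) M
    have h2 : ∏ k ∈ range M, ((X:PowerSeries ℚ) ^ (2*M) + 1 * X ^ (2*(M+k)+1)) =
        X ^ (2*M^2) * Q := by
      have : ∀ k ∈ range M, ((X:PowerSeries ℚ) ^ (2*M) + 1 * X ^ (2*(M+k)+1)) =
          X ^ (2*M) * (1 + X ^ (2*k+1)) := by
        intro k _
        have e : 2*(M+k)+1 = 2*M + (2*k+1) := by ring
        rw [e, pow_add]
        ring
      rw [prod_congr rfl this, prod_mul_distrib, prod_const, ← pow_mul, card_range]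
      congr 2
      ring
    rw [h1, h2]
    calc X ^ (M^2) * Q * (X ^ (2*M^2) * Q) = X ^ (M^2) * X ^ (2*M^2) * Q^2 := by ring
      _ = X ^ (3*M^2) * Q ^ 2 := by rw [← pow_add]; congr 2; ring
  have hR : ∑ j ∈ range (2*M+1), X ^ (j^2) * gb (2*M) j * (1:PowerSeries ℚ) ^ j *
      ((X:PowerSeries ℚ) ^ (2*M)) ^ (2*M - j) =
      X ^ (3*M^2) * ∑ j ∈ range (2*M+1), X ^ ((dd M j)^2) * gb (2*M) j := by
    rw [mul_sum]
    refine sum_congr rfl fun j hj => ?_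
    rw [mem_range] at hj
    have hj2 : j ≤ 2*M := by omega
    have e : j^2 + 2*M*(2*M-j) = 3*M^2 + (dd M j)^2 := by
      rcases le_or_gt j M with h | h
      · rw [dd, if_pos h]
        zify [h, hj2]
        ring
      · rw [dd, if_neg (by omega)]
        zify [le_of_lt h, hj2]
        ring
    calc X ^ (j^2) * gb (2*M) j * (1:PowerSeries ℚ)^j * ((X:PowerSeries ℚ)^(2*M))^(2*M-j)
        = X ^ (j^2) * X ^ (2*M*(2*M-j)) * gb (2*M) j := by rw [one_pow, ← pow_mul]; ring
      _ = X ^ (3*M^2 + (dd M j)^2) * gb (2*M) j := by rw [← pow_add, e]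
      _ = X ^ (3*M^2) * (X ^ ((dd M j)^2) * gb (2*M) j) := by rw [pow_add]; ring
  rw [hL, hR] at hk
  exact mul_left_cancel₀ (pow_ne_zero _ X_ne_zero) hk

/-- `f ≡ 1 mod X^c` -/
def C1 (c : ℕ) (f : PowerSeries ℚ) : Prop := ∃ h, f = 1 + X ^ c * h

lemma C1_one (c : ℕ) : C1 c 1 := ⟨0, by ring⟩

lemma C1_mul {c : ℕ} {f g : PowerSeries ℚ} (hf : C1 c f) (hg : C1 c g) : C1 c (f * g) := by
  obtain ⟨u, rfl⟩ := hf
  obtain ⟨v, rfl⟩ := hg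
  exact ⟨u + v + X ^ c * u * v, by ring⟩

lemma C1_prod {ι : Type*} {c : ℕ} (s : Finset ι) (f : ι → PowerSeries ℚ)
    (h : ∀ i ∈ s, C1 c (f i)) : C1 c (∏ i ∈ s, f i) :=
  prod_induction f (C1 c) (fun _ _ => C1_mul) (C1_one c) h

lemma C1_sub {c e : ℕ} (h : c ≤ e) : C1 c (1 - X ^ e : PowerSeries ℚ) :=
  ⟨-X ^ (e - c), by rw [mul_neg, ← pow_add, Nat.add_sub_cancel' h]; ring⟩

lemma C1_add {c e : ℕ} (h : c ≤ e) : C1 c (1 + X ^ e : PowerSeries ℚ) :=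
  ⟨X ^ (e - c), by rw [← pow_add, Nat.add_sub_cancel' h]⟩

lemma C1_of_mul {c : ℕ} {g u v : PowerSeries ℚ} (hu : C1 c u) (hv : C1 c v)
    (h : g * u = v) : C1 c g := by
  obtain ⟨h₁, rfl⟩ := hu
  obtain ⟨h₂, rfl⟩ := hv
  exact ⟨h₂ - g * h₁, by linear_combination h⟩

lemma core (M p : ℕ) (hp : p ≤ M) : C1 (2*p+2) (gb (2*M) p * d M) := by
  have h := gbClosed (2*M) p (by omega)
  set E1 : PowerSeries ℚ := ∏ k ∈ range (M-p), (1 - X ^ (2*(M+k)+2)) with hE1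
  set E2 : PowerSeries ℚ := ∏ k ∈ range M, (1 - X ^ (2*(M+k)+2)) with hE2
  set E3 : PowerSeries ℚ := ∏ k ∈ range (M-p), (1 - X ^ (2*(p+k)+2)) with hE3
  have e1 : d (2*M - p) = d M * E1 := by
    rw [show 2*M - p = M + (M - p) by omega, d, prod_range_add]
    rfl
  have e2 : d (2*M) = d M * E2 := by
    rw [show 2*M = M + M by omega, d, prod_range_add]
    rfl
  have e3 : d M = d p * E3 := by
    rw [show M = p + (M - p) by omega, d, prod_range_add]
    rfl
  have step1 : gb (2*M) p * d p * E1 = E2 := by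
    apply mul_right_cancel₀ (d_ne_zero M)
    calc gb (2*M) p * d p * E1 * d M = gb (2*M) p * d p * (d M * E1) := by ring
      _ = d M * E2 := by rw [← e1, h, e2]
      _ = E2 * d M := by ring
  have step2 : gb (2*M) p * d M * E1 = E2 * E3 := by
    calc gb (2*M) p * d M * E1 = gb (2*M) p * d p * E1 * E3 := by rw [e3]; ring
      _ = E2 * E3 := by rw [step1]
  refine C1_of_mul ?_ ?_ step2
  · exact C1_prod _ _ fun k _ => C1_sub (by omega)
  · refine C1_mul (C1_prod _ _ fun k _ => C1_sub (by omega)) ?_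
    refine C1_prod _ _ fun k hk => C1_sub ?_
    omega

lemma core' (M j : ℕ) (hj : j ≤ 2*M) : C1 (2*(M - dd M j)+2) (gb (2*M) j * d M) := by
  rcases le_or_gt j M with h | h
  · rw [dd, if_pos h, show M - (M - j) = j by omega]
    exact core M j h
  · rw [dd, if_neg (by omega), show M - (j - M) = 2*M - j by omega]
    rw [gb_symm (2*M) j hj]
    exact core M (2*M - j) (by omega)

lemma C1_mono {c c' : ℕ} {f : PowerSeries ℚ} (h : c' ≤ c) (hf : C1 c f) : C1 c' f := by
  obtain ⟨u, rfl⟩ := hf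
  exact ⟨X ^ (c - c') * u, by rw [← mul_assoc, ← pow_add, Nat.add_sub_cancel' h]⟩

lemma coeff_X_pow_mul_zero {N b : ℕ} (h : N < b) (f : PowerSeries ℚ) :
    coeff N (X ^ b * f) = 0 := by
  rw [coeff_mul]
  apply sum_eq_zero
  rintro ⟨i, j⟩ hij
  rw [HasAntidiagonal.mem_antidiagonal] at hij
  rw [coeff_X_pow, if_neg (by omega)]
  simp

lemma coeff_mul_C1 {i c : ℕ} (hic : i < c) (A : PowerSeries ℚ) {g : PowerSeries ℚ}
    (hg : C1 c g) : coeff i (A * g) = coeff i A := by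
  obtain ⟨h, rfl⟩ := hg
  rw [mul_add, mul_one, map_add, show A * (X ^ c * h) = X ^ c * (A * h) by ring,
    coeff_X_pow_mul_zero hic]
  ring

lemma trunc (F : ℕ → PowerSeries ℚ) (hF : ∀ k, C1 (k+1) (F k)) {i N : ℕ} (hi : i ≤ N) :
    coeff i (iProd F) = coeff i (∏ k ∈ range (N+1), F k) := by
  rw [iProd, coeff_mk]
  have hsplit := prod_range_add F (i+1) (N-i)
  rw [show (i+1) + (N-i) = N+1 by omega] at hsplit
  rw [hsplit, coeff_mul_C1 (Nat.lt_succ_self i) _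
    (C1_prod _ _ fun k _ => C1_mono (by omega) (hF (i+1+k)))]

lemma dvd5 (N : ℕ) :
    (X : PowerSeries ℚ) ^ (N+1) ∣ P₅ - ∏ k ∈ range (N+1), (1 + X ^ (2*k+1)) := by
  rw [X_pow_dvd_iff]
  intro m hm
  rw [map_sub, sub_eq_zero]
  exact trunc _ (fun k => C1_add (by omega)) (by omega)

lemma dvd4 (N : ℕ) : (X : PowerSeries ℚ) ^ (N+1) ∣ P₄ - d (N+1) := by
  rw [X_pow_dvd_iff]
  intro m hm
  rw [map_sub, sub_eq_zero]
  exact trunc _ (fun k => C1_sub (by omega)) (by omega)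

lemma coeff_main (N : ℕ) :
    coeff N ((∏ k ∈ range (N+1), (1 + X ^ (2*k+1) : PowerSeries ℚ)) ^ 2 * d (N+1)) =
      ∑ j ∈ range (2*(N+1)+1), (if N = (dd (N+1) j)^2 then (1:ℚ) else 0) := by
  set M := N + 1 with hM
  rw [star M, sum_mul, map_sum]
  refine sum_congr rfl fun j hj => ?_
  rw [mem_range] at hj
  obtain ⟨h, hh⟩ := core' M j (by omega)
  set n := dd M j with hn
  have hnM : n ≤ M := by
    rw [hn, dd]; split <;> omega
  rw [mul_assoc, hh, mul_add, mul_one, ← mul_assoc, ← pow_add, map_add, coeff_X_pow]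
  have hlt : N < n^2 + (2*(M-n)+2) := by
    have h1 : n ≤ n^2 := Nat.le_self_pow (by norm_num) n
    omega
  rw [coeff_X_pow_mul_zero hlt]
  ring

lemma coeff_theta (N : ℕ) :
    coeff N theta = ∑ j ∈ range (2*(N+1)+1), (if N = (dd (N+1) j)^2 then (1:ℚ) else 0) := by
  obtain ⟨M, hM⟩ : ∃ M : ℕ, M = N + 1 := ⟨_, rfl⟩
  rw [← hM, theta, coeff_mk]
  have hsupp : (Function.support fun n : ℤ => if n ^ 2 = (N : ℤ) then (1:ℚ) else 0) ⊆
      (Finset.Icc (-(M:ℤ)) M : Finset ℤ) := by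
    intro n hn
    rw [Function.mem_support] at hn
    have hn2 : n ^ 2 = (N : ℤ) := by
      by_contra hc
      exact hn (if_neg hc)
    simp only [Finset.coe_Icc, Set.mem_Icc]
    have hNM : (N:ℤ) < (M:ℤ) := by exact_mod_cast (by omega : N < M)
    constructor
    · nlinarith [sq_nonneg (n + M)]
    · nlinarith [sq_nonneg (n - M)]
  rw [finsum_eq_sum_of_support_subset _ hsupp]
  have hmap : (Finset.Icc (-(M:ℤ)) M) =
      (range (2*M+1)).map ⟨fun j : ℕ => (j:ℤ) - (M:ℤ), by
        intro a b hab
        simp only at hab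
        omega⟩ := by
    ext n
    simp only [mem_Icc, mem_map, mem_range, Function.Embedding.coeFn_mk]; dsimp only [DFunLike.coe]
    constructor
    · intro hn
      exact ⟨(n + M).toNat, by omega, by omega⟩
    · rintro ⟨j, hj, rfl⟩
      omega
  rw [hmap, sum_map]
  refine sum_congr rfl fun j hj => ?_
  rw [mem_range] at hj
  dsimp only [DFunLike.coe]
  have key2 : (((j:ℤ) - M) ^ 2 = (N:ℤ)) ↔ (N = (dd M j)^2) := by
    have hcast : ((j:ℤ) - M) ^ 2 = ((dd M j : ℕ) : ℤ) ^ 2 := by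
      rcases le_or_gt j M with h | h
      · rw [dd, if_pos h]
        push_cast [h]
        ring
      · rw [dd, if_neg (by omega)]
        push_cast [le_of_lt h]
        ring
    rw [hcast]
    constructor
    · intro h'
      exact_mod_cast h'.symm
    · intro h'
      exact_mod_cast h'.symm
  rw [if_congr key2 rfl rfl]

end

end JTP

theorem jacobi_triple_product_specialization : P₅ ^ 2 * P₄ = theta := by
  ext N
  obtain ⟨u, hu⟩ := JTP.dvd5 N
  obtain ⟨v, hv⟩ := JTP.dvd4 N
  set Q : PowerSeries ℚ := ∏ k ∈ range (N+1), (1 + X ^ (2*k+1)) with hQ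
  have hP5 : P₅ = Q + X ^ (N+1) * u := by linear_combination hu
  have hP4 : P₄ = JTP.d (N+1) + X ^ (N+1) * v := by linear_combination hv
  have expand : P₅ ^ 2 * P₄ = Q ^ 2 * JTP.d (N+1) +
      X ^ (N+1) * (2*Q*u*JTP.d (N+1) + X ^ (N+1)*u^2*JTP.d (N+1) + (Q + X ^ (N+1)*u)^2 * v) := by
    rw [hP5, hP4]; ring
  rw [expand, map_add, JTP.coeff_X_pow_mul_zero (Nat.lt_succ_self N), add_zero,
    JTP.coeff_main N, JTP.coeff_theta N]
end

section
/- As formal power series, (-q;q^2)_\infty/(q;q^2)_\infty = \frac{(-q^2;q^2)_\infty}{(q^2;q^2)_\infty} \sum_{n=-\infty}^{\infty} q^{n^2}. -/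
open PowerSeries Finset

namespace OPOProof

/-! ### Congruence modulo `X^M` -/

def Cong (M : ℕ) (f g : PowerSeries ℚ) : Prop :=
  ∀ n < M, PowerSeries.coeff n f = PowerSeries.coeff n g

lemma Cong.refl (M : ℕ) (f : PowerSeries ℚ) : Cong M f f := fun _ _ => rfl

lemma Cong.symm {M f g} (h : Cong M f g) : Cong M g f := fun n hn => (h n hn).symm

lemma Cong.trans {M f g h} (h1 : Cong M f g) (h2 : Cong M g h) : Cong M f h :=
  fun n hn => (h1 n hn).trans (h2 n hn)

lemma Cong.mono {M M' f g} (hM : M' ≤ M) (h : Cong M f g) : Cong M' f g :=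
  fun n hn => h n (lt_of_lt_of_le hn hM)

lemma Cong.mul {M f f' g g'} (h1 : Cong M f f') (h2 : Cong M g g') :
    Cong M (f * g) (f' * g') := by
  intro n hn
  rw [coeff_mul, coeff_mul]
  refine Finset.sum_congr rfl ?_
  rintro ⟨i, j⟩ hij
  rw [Finset.HasAntidiagonal.mem_antidiagonal] at hij
  rw [h1 i (by omega), h2 j (by omega)]

lemma Cong.sum {M : ℕ} {s : Finset ℕ} {f g : ℕ → PowerSeries ℚ}
    (h : ∀ i ∈ s, Cong M (f i) (g i)) :
    Cong M (∑ i ∈ s, f i) (∑ i ∈ s, g i) := by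
  intro n hn
  rw [map_sum, map_sum]
  exact Finset.sum_congr rfl fun i hi => h i hi n hn

lemma Cong.prod {M : ℕ} {s : Finset ℕ} {f g : ℕ → PowerSeries ℚ}
    (h : ∀ i ∈ s, Cong M (f i) (g i)) :
    Cong M (∏ i ∈ s, f i) (∏ i ∈ s, g i) := by
  classical
  induction s using Finset.induction_on with
  | empty => simpa using Cong.refl M 1
  | insert _ _ hx ih =>
    rw [Finset.prod_insert hx, Finset.prod_insert hx]
    exact Cong.mul (h _ (Finset.mem_insert_self _ _))
      (ih fun i hi => h i (Finset.mem_insert_of_mem hi))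

lemma Cong.mul_X_pow {M e f g} (h : Cong M f g) :
    Cong (M + e) (f * X ^ e) (g * X ^ e) := by
  intro n hn
  rw [PowerSeries.coeff_mul_X_pow', PowerSeries.coeff_mul_X_pow']
  split
  · exact h _ (by omega)
  · rfl

lemma cong_one_add {M e : ℕ} (hM : M ≤ e) :
    Cong M (1 + (X : PowerSeries ℚ) ^ e) 1 := by
  intro n hn
  rw [map_add, PowerSeries.coeff_X_pow, if_neg (by omega)]
  ring

lemma cong_one_sub {M e : ℕ} (hM : M ≤ e) :
    Cong M (1 - (X : PowerSeries ℚ) ^ e) 1 := by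
  intro n hn
  rw [map_sub, PowerSeries.coeff_X_pow, if_neg (by omega)]
  ring

/-! ### Truncation of `iProd` -/

lemma iProd_cong (F : ℕ → PowerSeries ℚ) (hF : ∀ k, Cong (k + 1) (F k) 1)
    {M N : ℕ} (hMN : M ≤ N) :
    Cong M (iProd F) (∏ k ∈ Finset.range N, F k) := by
  intro n hn
  rw [iProd, coeff_mk]
  have key : ∀ L, n + 1 ≤ L →
      PowerSeries.coeff n (∏ k ∈ Finset.range L, F k) =
      PowerSeries.coeff n (∏ k ∈ Finset.range (n + 1), F k) := by
    intro L hL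
    induction L, hL using Nat.le_induction with
    | base => rfl
    | succ L hL ih =>
      rw [Finset.prod_range_succ]
      have h1 : Cong (n + 1) (F L) 1 := (hF L).mono (by omega)
      have := (Cong.mul (Cong.refl (n+1) (∏ k ∈ Finset.range L, F k)) h1) n (by omega)
      rw [this, mul_one, ih]
  exact (key N (by omega)).symm

/-! ### Gaussian binomials (with `t = X^2`) -/

noncomputable def gb : ℕ → ℕ → PowerSeries ℚ
  | 0, 0 => 1
  | 0, _ + 1 => 0
  | _ + 1, 0 => 1
  | n + 1, k + 1 => gb n (k + 1) + X ^ (2 * (n - k)) * gb n k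

lemma gb_zero_of_lt : ∀ n k, n < k → gb n k = 0 := by
  intro n
  induction n with
  | zero => intro k hk; match k, hk with | k+1, _ => rfl
  | succ n ih =>
    intro k hk
    match k, hk with
    | k+1, hk =>
      show gb n (k + 1) + X ^ (2 * (n - k)) * gb n k = 0
      rw [ih _ (by omega), ih _ (by omega), mul_zero, add_zero]

lemma gb_diag : ∀ n, gb n n = 1 := by
  intro n
  induction n with
  | zero => rfl
  | succ n ih =>
    show gb n (n + 1) + X ^ (2 * (n - n)) * gb n n = 1
    rw [gb_zero_of_lt _ _ (by omega), ih, mul_one, zero_add, Nat.sub_self, mul_zero, pow_zero]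

lemma gb_zero_left (n : ℕ) : gb n 0 = 1 := by
  cases n <;> rfl

lemma gb_pascal1 (n k : ℕ) :
    gb (n + 1) (k + 1) = gb n (k + 1) + X ^ (2 * (n - k)) * gb n k := rfl

/-- `(t;t)_r` with `t = X^2`, i.e. `∏_{k<r} (1 - X^{2k+2})`. -/
noncomputable def tq (r : ℕ) : PowerSeries ℚ :=
  ∏ k ∈ Finset.range r, (1 - (X : PowerSeries ℚ) ^ (2 * k + 2))

lemma tq_succ (r : ℕ) : tq (r + 1) = tq r * (1 - X ^ (2 * r + 2)) :=
  Finset.prod_range_succ _ _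

lemma tq_def (r : ℕ) :
    tq r = ∏ k ∈ Finset.range r, (1 - (X : PowerSeries ℚ) ^ (2 * k + 2)) := rfl

lemma constantCoeff_tq (r : ℕ) : PowerSeries.constantCoeff (tq r) = 1 := by
  rw [tq, map_prod]
  apply Finset.prod_eq_one
  intro k _
  simp

lemma tq_ne_zero (r : ℕ) : tq r ≠ 0 := by
  intro h
  have := constantCoeff_tq r
  rw [h, map_zero] at this
  norm_num at this

lemma gb_mul_tq : ∀ n k, k ≤ n → gb n k * (tq k * tq (n - k)) = tq n := by
  intro n
  induction n with
  | zero =>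
    intro k hk
    obtain rfl : k = 0 := by omega
    simp [gb, tq]
  | succ n ih =>
    intro k hk
    match k with
    | 0 =>
      rw [gb_zero_left]
      simp [tq]
    | j + 1 =>
      rw [gb_pascal1]
      rcases Nat.lt_or_ge j n with hj | hj
      · -- j + 1 ≤ n
        obtain ⟨d, rfl⟩ : ∃ d, n = j + 1 + d := ⟨n - (j + 1), by omega⟩
        have e1 := ih (j + 1) (by omega)
        have e2 := ih j (by omega)
        rw [show j + 1 + d - (j + 1) = d by omega] at e1
        rw [show j + 1 + d - j = d + 1 by omega] at e2
        rw [show j + 1 + d + 1 - (j + 1) = d + 1 by omega,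
          show 2 * (j + 1 + d - j) = 2 * (d + 1) by omega]
        rw [tq_succ (j + 1 + d), tq_succ d, tq_succ j] at *
        linear_combination ((1 : PowerSeries ℚ) - X ^ (2 * d + 2)) * e1
          + X ^ (2 * d + 2) * (1 - X ^ (2 * j + 2)) * e2
      · -- j = n
        have hj' : j = n := by omega
        subst hj'
        rw [gb_zero_of_lt _ _ (by omega), gb_diag, zero_add, Nat.sub_self, mul_zero, pow_zero,
          one_mul, one_mul, Nat.sub_self]
        simp [tq]

lemma gb_pascal2 (n k : ℕ) :
    gb (n + 1) (k + 1) = X ^ (2 * (k + 1)) * gb n (k + 1) + gb n k := by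
  rcases Nat.lt_or_ge n k with h | h
  · rw [gb_zero_of_lt _ _ (by omega), gb_zero_of_lt _ _ (by omega),
      gb_zero_of_lt _ _ (by omega), mul_zero, add_zero]
  rcases Nat.lt_or_ge k n with hk | hk
  · -- k + 1 ≤ n
    obtain ⟨d, rfl⟩ : ∃ d, n = k + 1 + d := ⟨n - (k + 1), by omega⟩
    have hu : tq (k + 1) * tq (d + 1) ≠ 0 := mul_ne_zero (tq_ne_zero _) (tq_ne_zero _)
    apply mul_right_cancel₀ hu
    have hL := gb_mul_tq (k + 1 + d + 1) (k + 1) (by omega)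
    have e1 := gb_mul_tq (k + 1 + d) (k + 1) (by omega)
    have e2 := gb_mul_tq (k + 1 + d) k (by omega)
    rw [show k + 1 + d + 1 - (k + 1) = d + 1 by omega] at hL
    rw [show k + 1 + d - (k + 1) = d by omega] at e1
    rw [show k + 1 + d - k = d + 1 by omega] at e2
    rw [tq_succ (k + 1 + d), tq_succ d, tq_succ k] at *
    linear_combination hL - (X ^ (2 * (k + 1)) * ((1 : PowerSeries ℚ) - X ^ (2 * d + 2))) * e1
      - ((1 : PowerSeries ℚ) - X ^ (2 * k + 2)) * e2
  · -- k = n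
    have hk' : k = n := by omega
    subst hk'
    rw [gb_diag, gb_zero_of_lt _ _ (by omega), gb_diag, mul_zero, zero_add]

/-! ### Summed Pascal identities -/

lemma sumP1 (m : ℕ) (f : ℕ → PowerSeries ℚ) :
    ∑ j ∈ Finset.range (m + 2), f j * gb (m + 1) j
      = ∑ j ∈ Finset.range (m + 1), f j * gb m j
        + ∑ j ∈ Finset.range (m + 1), f (j + 1) * X ^ (2 * (m - j)) * gb m j := by
  have h1 := Finset.sum_range_succ' (fun j => f j * gb (m + 1) j) (m + 1)
  have h2 := Finset.sum_range_succ' (fun j => f j * gb m j) (m + 1)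
  have h3 := Finset.sum_range_succ (fun j => f j * gb m j) (m + 1)
  have h4 : ∑ j ∈ Finset.range (m + 1), f (j + 1) * gb (m + 1) (j + 1)
      = ∑ j ∈ Finset.range (m + 1), (f (j + 1) * gb m (j + 1)
          + f (j + 1) * X ^ (2 * (m - j)) * gb m j) :=
    Finset.sum_congr rfl (fun j _ => by rw [gb_pascal1]; ring)
  rw [Finset.sum_add_distrib] at h4
  have h5 : gb m (m + 1) = 0 := gb_zero_of_lt _ _ (by omega)
  have h6 : (gb (m + 1) 0 : PowerSeries ℚ) = gb m 0 := by rw [gb_zero_left, gb_zero_left]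
  rw [h1, h4, h6]
  linear_combination h3 - h2 + f (m + 1) * h5

lemma sumP2 (m : ℕ) (f : ℕ → PowerSeries ℚ) :
    ∑ j ∈ Finset.range (m + 2), f j * gb (m + 1) j
      = ∑ j ∈ Finset.range (m + 1), f j * X ^ (2 * j) * gb m j
        + ∑ j ∈ Finset.range (m + 1), f (j + 1) * gb m j := by
  have h1 := Finset.sum_range_succ' (fun j => f j * gb (m + 1) j) (m + 1)
  have h2 := Finset.sum_range_succ' (fun j => f j * X ^ (2 * j) * gb m j) (m + 1)
  have h3 := Finset.sum_range_succ (fun j => f j * X ^ (2 * j) * gb m j) (m + 1)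
  have h4 : ∑ j ∈ Finset.range (m + 1), f (j + 1) * gb (m + 1) (j + 1)
      = ∑ j ∈ Finset.range (m + 1), (f (j + 1) * X ^ (2 * (j + 1)) * gb m (j + 1)
          + f (j + 1) * gb m j) :=
    Finset.sum_congr rfl (fun j _ => by rw [gb_pascal2]; ring)
  rw [Finset.sum_add_distrib] at h4
  have h5 : gb m (m + 1) = 0 := gb_zero_of_lt _ _ (by omega)
  have h6 : (gb (m + 1) 0 : PowerSeries ℚ) = gb m 0 := by rw [gb_zero_left, gb_zero_left]
  have h7 : f 0 * gb m 0 = f 0 * X ^ (2 * 0) * gb m 0 := by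
    rw [mul_zero, pow_zero, mul_one]
  rw [h1, h4, h6, h7]
  linear_combination h3 - h2 + (f (m + 1) * X ^ (2 * (m + 1))) * h5

/-! ### The exponent function and finite Jacobi triple product at z = 1 -/

def E (N j : ℕ) : ℕ := (((j : ℤ) - N) ^ 2).toNat

lemma E_cast (N j : ℕ) : ((E N j : ℤ)) = ((j : ℤ) - N) ^ 2 :=
  Int.toNat_of_nonneg (sq_nonneg _)

noncomputable def Sth (N : ℕ) : PowerSeries ℚ :=
  ∑ j ∈ Finset.range (2 * N + 1), X ^ (E N j) * gb (2 * N) j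

lemma jtp : ∀ N, Sth N = ∏ k ∈ Finset.range N, (1 + (X : PowerSeries ℚ) ^ (2 * k + 1)) ^ 2 := by
  intro N
  induction N with
  | zero =>
    simp only [Sth]
    norm_num
    simp [E, gb]
  | succ N ih =>
    rw [Finset.prod_range_succ, ← ih]
    have h1 : Sth (N + 1)
        = ∑ j ∈ Finset.range (2 * N + 1 + 2), X ^ (E (N + 1) j) * gb (2 * N + 1 + 1) j := by
      simp only [Sth]
      rw [show 2 * (N + 1) + 1 = 2 * N + 1 + 2 by ring, show 2 * (N + 1) = 2 * N + 1 + 1 by ring]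
    have h2 := sumP1 (2 * N + 1) (fun j => (X : PowerSeries ℚ) ^ (E (N + 1) j))
    have h3 := sumP2 (2 * N) (fun j => (X : PowerSeries ℚ) ^ (E (N + 1) j))
    have h4 := sumP2 (2 * N) (fun j =>
      (X : PowerSeries ℚ) ^ (E (N + 1) (j + 1)) * X ^ (2 * (2 * N + 1 - j)))
    rw [h1, h2, show 2 * N + 1 + 1 = 2 * N + 2 by omega, h3, h4, Sth, Finset.sum_mul,
      ← Finset.sum_add_distrib, ← Finset.sum_add_distrib, ← Finset.sum_add_distrib]
    apply Finset.sum_congr rfl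
    intro j hjmem
    have hj : j ≤ 2 * N := by
      have := Finset.mem_range.mp hjmem; omega
    have hA : E (N + 1) j + 2 * j = E N j + (2 * N + 1) := by
      have c1 := E_cast (N + 1) j
      have c2 := E_cast N j
      have : ((E (N + 1) j : ℤ)) + 2 * j = ((E N j : ℤ)) + (2 * N + 1) := by
        rw [c1, c2]; push_cast; ring
      exact_mod_cast this
    have hB : E (N + 1) (j + 1) = E N j := by
      have c1 := E_cast (N + 1) (j + 1)
      have c2 := E_cast N j
      have : ((E (N + 1) (j + 1) : ℤ)) = ((E N j : ℤ)) := by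
        rw [c1, c2]; push_cast; ring
      exact_mod_cast this
    have hC : E (N + 1) (j + 1 + 1) + 2 * (2 * N + 1 - (j + 1)) = E N j + (2 * N + 1) := by
      have c1 := E_cast (N + 1) (j + 1 + 1)
      have c2 := E_cast N j
      have hsub : ((2 * N + 1 - (j + 1) : ℕ) : ℤ) = 2 * N - j := by omega
      have : ((E (N + 1) (j + 1 + 1) : ℤ)) + 2 * ((2 * N + 1 - (j + 1) : ℕ) : ℤ)
          = ((E N j : ℤ)) + (2 * N + 1) := by
        rw [c1, c2, hsub]; push_cast; ring
      exact_mod_cast this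
    have hD : 2 * (2 * N + 1 - j) + 2 * j = (2 * N + 1) + (2 * N + 1) := by omega
    have hp1 : (X : PowerSeries ℚ) ^ (E (N + 1) j) * X ^ (2 * j)
        = X ^ (E N j) * X ^ (2 * N + 1) := by
      rw [← pow_add, ← pow_add, hA]
    have hp2 : (X : PowerSeries ℚ) ^ (E (N + 1) (j + 1)) = X ^ (E N j) := by rw [hB]
    have hp3 : (X : PowerSeries ℚ) ^ (2 * (2 * N + 1 - j)) * X ^ (2 * j)
        = X ^ (2 * N + 1) * X ^ (2 * N + 1) := by
      rw [← pow_add, ← pow_add, hD]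
    have hp4 : (X : PowerSeries ℚ) ^ (E (N + 1) (j + 1 + 1)) * X ^ (2 * (2 * N + 1 - (j + 1)))
        = X ^ (E N j) * X ^ (2 * N + 1) := by
      rw [← pow_add, ← pow_add, hC]
    linear_combination (gb (2 * N) j) * hp1 + (gb (2 * N) j) * hp2
      + (X ^ (2 * (2 * N + 1 - j)) * X ^ (2 * j) * gb (2 * N) j) * hp2
      + (X ^ (E N j) * gb (2 * N) j) * hp3 + (gb (2 * N) j) * hp4

/-! ### `gb (2N) j * tq N ≡ 1` -/

lemma cong_Ico_one {M a b : ℕ} (h : ∀ k, a ≤ k → M ≤ 2 * k + 2) :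
    Cong M (∏ k ∈ Finset.Ico a b, (1 - (X : PowerSeries ℚ) ^ (2 * k + 2))) 1 := by
  have := Cong.prod (M := M) (s := Finset.Ico a b)
    (f := fun k => 1 - (X : PowerSeries ℚ) ^ (2 * k + 2)) (g := fun _ => 1)
    (fun k hk => cong_one_sub (h k (Finset.mem_Ico.mp hk).1))
  rwa [Finset.prod_const_one] at this

lemma gb_tq_cong (N j : ℕ) (hj : j ≤ 2 * N) :
    Cong (2 * (min j (2 * N - j)) + 2) (gb (2 * N) j * tq N) 1 := by
  set r := 2 * (min j (2 * N - j)) + 2 with hr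
  have key : gb (2 * N) j * (tq j * tq (2 * N - j)) = tq (2 * N) := gb_mul_tq _ _ hj
  set A := ∏ k ∈ Finset.Ico j (2 * N), (1 - (X : PowerSeries ℚ) ^ (2 * k + 2)) with hAdef
  set B := ∏ k ∈ Finset.Ico (2 * N - j) (2 * N), (1 - (X : PowerSeries ℚ) ^ (2 * k + 2)) with hBdef
  set C := ∏ k ∈ Finset.Ico N (2 * N), (1 - (X : PowerSeries ℚ) ^ (2 * k + 2)) with hCdef
  have hA : tq j * A = tq (2 * N) :=
    Finset.prod_range_mul_prod_Ico _ (by omega)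
  have hB : tq (2 * N - j) * B = tq (2 * N) :=
    Finset.prod_range_mul_prod_Ico _ (by omega)
  have hC : tq N * C = tq (2 * N) :=
    Finset.prod_range_mul_prod_Ico _ (by omega)
  have h2 : gb (2 * N) j * tq (2 * N) = A * B := by
    apply mul_right_cancel₀ (tq_ne_zero (2 * N))
    linear_combination (-(gb (2 * N) j * tq (2 * N))) * hA
      + (-(gb (2 * N) j * tq j * A)) * hB + (A * B) * key
  have h3 : gb (2 * N) j * tq N * C = A * B := by
    rw [mul_assoc, hC, h2]
  have c1 : Cong r A 1 := cong_Ico_one (fun k hk => by omega)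
  have c2 : Cong r B 1 := cong_Ico_one (fun k hk => by omega)
  have c3 : Cong r C 1 := cong_Ico_one (fun k hk => by omega)
  have step1 : Cong r (gb (2 * N) j * tq N) (A * B) := by
    have hh := Cong.mul (Cong.refl r (gb (2 * N) j * tq N)) c3
    rw [h3, mul_one] at hh
    exact hh.symm
  have step2 : Cong r (A * B) 1 := by
    have := Cong.mul c1 c2
    rwa [mul_one] at this
  exact step1.trans step2

/-! ### Counting: the partial theta sum -/

lemma theta_count (N : ℕ) :
    Cong (2 * N + 1) (∑ j ∈ Finset.range (2 * N + 1), (X : PowerSeries ℚ) ^ (E N j)) theta := by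
  intro n hn
  rw [map_sum, theta, coeff_mk]
  have hsub : (Function.support fun m : ℤ => if m ^ 2 = (n : ℤ) then (1 : ℚ) else 0)
      ⊆ ↑((Finset.range (2 * N + 1)).image (fun j : ℕ => (j : ℤ) - N)) := by
    intro m hm
    have hm2 : m ^ 2 = (n : ℤ) := by
      by_contra hc
      simp [Function.mem_support, hc] at hm
    have h2 : (n : ℤ) ≤ 2 * N := by exact_mod_cast Nat.lt_succ_iff.mp hn
    have hb1 : m ≤ N := by nlinarith [sq_nonneg (m - N - 1)]
    have hb2 : -(N : ℤ) ≤ m := by nlinarith [sq_nonneg (m + N + 1)]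
    simp only [Finset.coe_image, Set.mem_image, Finset.mem_coe, Finset.mem_range]
    exact ⟨(m + N).toNat, by omega, by omega⟩
  rw [finsum_eq_sum_of_support_subset _ hsub]
  rw [Finset.sum_image (by intro a _ b _ h; have h' : (a : ℤ) - N = (b : ℤ) - N := h; omega)]
  apply Finset.sum_congr rfl
  intro j _
  have h2 : (((j : ℤ) - N) ^ 2 = (n : ℤ)) ↔ (E N j = n) := by
    rw [← E_cast]; exact Nat.cast_inj
  rw [PowerSeries.coeff_X_pow]
  by_cases hE : E N j = n
  · rw [if_pos hE.symm, if_pos (h2.mpr hE)]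
  · rw [if_neg (fun hh => hE hh.symm), if_neg (fun hh => hE (h2.mp hh))]

/-! ### Gauss's identity, truncated -/

lemma gauss_cong (N : ℕ) :
    Cong (2 * N + 1)
      ((∏ k ∈ Finset.range N, (1 + (X : PowerSeries ℚ) ^ (2 * k + 1))) ^ 2 * tq N) theta := by
  have hprod : (∏ k ∈ Finset.range N, (1 + (X : PowerSeries ℚ) ^ (2 * k + 1))) ^ 2
      = Sth N := by
    rw [jtp N, ← Finset.prod_pow]
  rw [hprod, Sth, Finset.sum_mul]
  have step1 : Cong (2 * N + 1)
      (∑ j ∈ Finset.range (2 * N + 1), X ^ (E N j) * gb (2 * N) j * tq N)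
      (∑ j ∈ Finset.range (2 * N + 1), (X : PowerSeries ℚ) ^ (E N j)) := by
    apply Cong.sum
    intro j hjmem
    have hj : j ≤ 2 * N := by have := Finset.mem_range.mp hjmem; omega
    have base := gb_tq_cong N j hj
    have hmul := base.mul_X_pow (e := E N j)
    have hmod : 2 * N + 1 ≤ 2 * (min j (2 * N - j)) + 2 + E N j := by
      have hc := E_cast N j
      rcases le_total j N with h | h
      · rw [min_eq_left (by omega)]
        have : ((E N j : ℤ)) = ((j : ℤ) - N) ^ 2 := hc
        zify
        rw [this]
        nlinarith [sq_nonneg ((j : ℤ) - N + 1)]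
      · rw [min_eq_right (by omega)]
        zify [show j ≤ 2 * N from hj]
        rw [hc]
        nlinarith [sq_nonneg ((j : ℤ) - N - 1)]
    have h' : Cong (2 * N + 1) (gb (2 * N) j * tq N * X ^ (E N j)) ((X : PowerSeries ℚ) ^ (E N j)) := by
      have := hmul.mono hmod
      rwa [one_mul] at this
    have hshape : (X : PowerSeries ℚ) ^ (E N j) * gb (2 * N) j * tq N
        = gb (2 * N) j * tq N * X ^ (E N j) := by ring
    rw [hshape]
    exact h'
  exact step1.trans (theta_count N)

/-! ### Telescoping: `Q₃ * Q₆ * Q₅ ≡ 1` -/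

lemma tele (N : ℕ) :
    ∏ k ∈ Finset.range (2 * N), (1 - (X : PowerSeries ℚ) ^ (2 * k + 2))
      = (∏ k ∈ Finset.range N, (1 - (X : PowerSeries ℚ) ^ (4 * k + 4)))
        * ∏ k ∈ Finset.range N, (1 - (X : PowerSeries ℚ) ^ (4 * k + 2)) := by
  induction N with
  | zero => simp
  | succ N ih =>
    rw [show 2 * (N + 1) = 2 * N + 1 + 1 by ring, Finset.prod_range_succ,
      Finset.prod_range_succ, Finset.prod_range_succ, Finset.prod_range_succ, ih,
      show 2 * (2 * N + 1) + 2 = 4 * N + 4 by ring, show 2 * (2 * N) + 2 = 4 * N + 2 by ring]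
    ring

lemma mul56 (N : ℕ) :
    (∏ k ∈ Finset.range N, (1 - (X : PowerSeries ℚ) ^ (2 * k + 1)))
      * (∏ k ∈ Finset.range N, (1 + (X : PowerSeries ℚ) ^ (2 * k + 1)))
      = ∏ k ∈ Finset.range N, (1 - (X : PowerSeries ℚ) ^ (4 * k + 2)) := by
  rw [← Finset.prod_mul_distrib]
  apply Finset.prod_congr rfl
  intro k _
  have h : (X : PowerSeries ℚ) ^ (2 * k + 1) * X ^ (2 * k + 1) = X ^ (4 * k + 2) := by
    rw [← pow_add]; congr 1; ring
  linear_combination -h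

lemma mul34 (N : ℕ) :
    (∏ k ∈ Finset.range N, (1 + (X : PowerSeries ℚ) ^ (2 * k + 2)))
      * (∏ k ∈ Finset.range N, (1 - (X : PowerSeries ℚ) ^ (2 * k + 2)))
      = ∏ k ∈ Finset.range N, (1 - (X : PowerSeries ℚ) ^ (4 * k + 4)) := by
  rw [← Finset.prod_mul_distrib]
  apply Finset.prod_congr rfl
  intro k _
  have h : (X : PowerSeries ℚ) ^ (2 * k + 2) * X ^ (2 * k + 2) = X ^ (4 * k + 4) := by
    rw [← pow_add]; congr 1; ring
  linear_combination -h

lemma prod365 (N : ℕ) :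
    Cong (2 * N + 2)
      ((∏ k ∈ Finset.range N, (1 + (X : PowerSeries ℚ) ^ (2 * k + 2)))
        * ((∏ k ∈ Finset.range N, (1 - (X : PowerSeries ℚ) ^ (2 * k + 1)))
          * (∏ k ∈ Finset.range N, (1 + (X : PowerSeries ℚ) ^ (2 * k + 1))))) 1 := by
  rw [mul56]
  have key : (∏ k ∈ Finset.range N, (1 + (X : PowerSeries ℚ) ^ (2 * k + 2)))
      * (∏ k ∈ Finset.range N, (1 - (X : PowerSeries ℚ) ^ (4 * k + 2))) * tq N
      = (∏ k ∈ Finset.Ico N (2 * N), (1 - (X : PowerSeries ℚ) ^ (2 * k + 2))) * tq N := by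
    have hIco : tq N * ∏ k ∈ Finset.Ico N (2 * N), (1 - (X : PowerSeries ℚ) ^ (2 * k + 2))
        = tq (2 * N) := Finset.prod_range_mul_prod_Ico _ (by omega)
    calc (∏ k ∈ Finset.range N, (1 + (X : PowerSeries ℚ) ^ (2 * k + 2)))
          * (∏ k ∈ Finset.range N, (1 - (X : PowerSeries ℚ) ^ (4 * k + 2))) * tq N
        = ((∏ k ∈ Finset.range N, (1 + (X : PowerSeries ℚ) ^ (2 * k + 2))) * tq N)
          * (∏ k ∈ Finset.range N, (1 - (X : PowerSeries ℚ) ^ (4 * k + 2))) := by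
          ring
      _ = (∏ k ∈ Finset.range N, (1 - (X : PowerSeries ℚ) ^ (4 * k + 4)))
          * (∏ k ∈ Finset.range N, (1 - (X : PowerSeries ℚ) ^ (4 * k + 2))) := by
          rw [tq_def, mul34]
      _ = tq (2 * N) := by rw [← tele N, tq_def]
      _ = (∏ k ∈ Finset.Ico N (2 * N), (1 - (X : PowerSeries ℚ) ^ (2 * k + 2))) * tq N := by
          rw [← hIco]; ring
  have hT : (∏ k ∈ Finset.range N, (1 + (X : PowerSeries ℚ) ^ (2 * k + 2)))
      * (∏ k ∈ Finset.range N, (1 - (X : PowerSeries ℚ) ^ (4 * k + 2)))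
      = ∏ k ∈ Finset.Ico N (2 * N), (1 - (X : PowerSeries ℚ) ^ (2 * k + 2)) :=
    mul_right_cancel₀ (tq_ne_zero N) key
  rw [hT]
  exact cong_Ico_one (fun k hk => by omega)

/-! ### Main identity -/

lemma main_eq : P₅ * P₄ = P₃ * P₆ * theta := by
  apply PowerSeries.ext
  intro m
  set N := m + 1 with hN
  have c3 : Cong (m + 1) P₃ (∏ k ∈ Finset.range N, (1 + (X : PowerSeries ℚ) ^ (2 * k + 2))) :=
    iProd_cong _ (fun k => cong_one_add (by omega)) (le_refl _)
  have c4 : Cong (m + 1) P₄ (tq N) :=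
    iProd_cong _ (fun k => cong_one_sub (by omega)) (le_refl _)
  have c5 : Cong (m + 1) P₅ (∏ k ∈ Finset.range N, (1 + (X : PowerSeries ℚ) ^ (2 * k + 1))) :=
    iProd_cong _ (fun k => cong_one_add (by omega)) (le_refl _)
  have c6 : Cong (m + 1) P₆ (∏ k ∈ Finset.range N, (1 - (X : PowerSeries ℚ) ^ (2 * k + 1))) :=
    iProd_cong _ (fun k => cong_one_sub (by omega)) (le_refl _)
  set Q3 := ∏ k ∈ Finset.range N, (1 + (X : PowerSeries ℚ) ^ (2 * k + 2))
  set Q5 := ∏ k ∈ Finset.range N, (1 + (X : PowerSeries ℚ) ^ (2 * k + 1))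
  set Q6 := ∏ k ∈ Finset.range N, (1 - (X : PowerSeries ℚ) ^ (2 * k + 1))
  have cL : Cong (m + 1) (P₅ * P₄) (Q5 * tq N) := c5.mul c4
  have cR : Cong (m + 1) (P₃ * P₆ * theta) (Q3 * Q6 * theta) :=
    (c3.mul c6).mul (Cong.refl _ theta)
  have mid : Cong (m + 1) (Q3 * Q6 * theta) (Q5 * tq N) := by
    have h1 : Cong (m + 1) theta (Q5 ^ 2 * tq N) := (gauss_cong N).symm.mono (by omega)
    have h2 : Cong (m + 1) (Q3 * Q6 * theta) (Q3 * Q6 * (Q5 ^ 2 * tq N)) :=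
      (Cong.refl _ (Q3 * Q6)).mul h1
    have h3 : Q3 * Q6 * (Q5 ^ 2 * tq N) = (Q3 * (Q6 * Q5)) * (Q5 * tq N) := by ring
    have h4 : Cong (m + 1) ((Q3 * (Q6 * Q5)) * (Q5 * tq N)) (1 * (Q5 * tq N)) :=
      ((prod365 N).mono (by omega)).mul (Cong.refl _ _)
    have h5 : Cong (m + 1) (Q3 * Q6 * (Q5 ^ 2 * tq N)) (Q5 * tq N) := by
      rw [h3]
      have := h4
      rwa [one_mul] at this
    exact h2.trans h5
  have final : Cong (m + 1) (P₅ * P₄) (P₃ * P₆ * theta) :=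
    cL.trans (mid.symm.trans cR.symm)
  exact final m (by omega)

lemma constantCoeff_P₄ : PowerSeries.constantCoeff P₄ = 1 := by
  rw [P₄, ← PowerSeries.coeff_zero_eq_constantCoeff, iProd, PowerSeries.coeff_mk,
    Finset.prod_range_one]
  simp

lemma constantCoeff_P₆ : PowerSeries.constantCoeff P₆ = 1 := by
  rw [P₆, ← PowerSeries.coeff_zero_eq_constantCoeff, iProd, PowerSeries.coeff_mk,
    Finset.prod_range_one]
  simp

end OPOProof

theorem opo_gf_theta : P₅ * P₆⁻¹ = P₃ * P₄⁻¹ * theta := by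
  have i4 : P₄ * P₄⁻¹ = 1 :=
    PowerSeries.mul_inv_cancel _ (by rw [OPOProof.constantCoeff_P₄]; norm_num)
  have i6 : P₆ * P₆⁻¹ = 1 :=
    PowerSeries.mul_inv_cancel _ (by rw [OPOProof.constantCoeff_P₆]; norm_num)
  calc P₅ * P₆⁻¹ = P₅ * (P₄ * P₄⁻¹) * P₆⁻¹ := by rw [i4, mul_one]
    _ = (P₅ * P₄) * (P₄⁻¹ * P₆⁻¹) := by ring
    _ = (P₃ * P₆ * theta) * (P₄⁻¹ * P₆⁻¹) := by rw [OPOProof.main_eq]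
    _ = (P₃ * P₄⁻¹ * theta) * (P₆ * P₆⁻¹) := by ring
    _ = P₃ * P₄⁻¹ * theta := by rw [i6, mul_one]
end

section
/- As formal power series, (q;q^2)_\infty/(-q;q^2)_\infty = \frac{(-q^2;q^2)_\infty}{(q^2;q^2)_\infty} \sum_{n=-\infty}^{\infty} (-1)^n q^{n^2}. -/
open PowerSeries Finset

noncomputable section OPOAux

namespace OPOAux

/-- partial products of `(q²;q²)`: `pt r = ∏_{i<r} (1 - X^(2i+2))`. -/
def pt (r : ℕ) : PowerSeries ℚ := ∏ i ∈ Finset.range r, (1 - (X : PowerSeries ℚ) ^ (2 * i + 2))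

lemma constantCoeff_pt (r : ℕ) : constantCoeff (pt r) = 1 := by
  rw [pt, map_prod]
  refine Finset.prod_eq_one fun i _ => ?_
  simp

lemma pt_ne_zero (r : ℕ) : pt r ≠ 0 := by
  intro h
  have := constantCoeff_pt r
  rw [h, map_zero] at this
  exact zero_ne_one this

lemma pt_succ (r : ℕ) : pt (r + 1) = pt r * (1 - (X : PowerSeries ℚ) ^ (2 * r + 2)) :=
  Finset.prod_range_succ _ _

/-- Gaussian binomial coefficients (in variable `Q = X²`) as power series. -/
def qb : ℕ → ℕ → PowerSeries ℚ
  | 0, 0 => 1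
  | 0, _ + 1 => 0
  | _ + 1, 0 => 1
  | N + 1, r + 1 => qb N r + (X : PowerSeries ℚ) ^ (2 * (r + 1)) * qb N (r + 1)

@[simp] lemma qb_zero (N : ℕ) : qb N 0 = 1 := by cases N <;> rfl

lemma qb_succ (N r : ℕ) : qb (N + 1) (r + 1)
    = qb N r + (X : PowerSeries ℚ) ^ (2 * (r + 1)) * qb N (r + 1) := rfl

lemma qb_overflow : ∀ N r : ℕ, N < r → qb N r = 0 := by
  intro N
  induction N with
  | zero => intro r h; cases r with
    | zero => omega
    | succ r => rfl
  | succ N ih =>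
    intro r h
    cases r with
    | zero => omega
    | succ r =>
      rw [qb_succ, ih r (by omega), ih (r+1) (by omega), mul_zero, add_zero]

lemma qb_diag : ∀ N : ℕ, qb N N = 1 := by
  intro N
  induction N with
  | zero => rfl
  | succ N ih => rw [qb_succ, ih, qb_overflow N (N+1) (by omega), mul_zero, add_zero]

/-- product formula: `qb N r * pt r * pt (N - r) = pt N`. -/
lemma qb_pt : ∀ N r : ℕ, r ≤ N → qb N r * pt r * pt (N - r) = pt N := by
  intro N
  induction N with
  | zero => intro r h; interval_cases r; simp [pt]
  | succ N ih =>
    intro r h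
    cases r with
    | zero => simp [pt]
    | succ r =>
      rcases eq_or_lt_of_le h with h' | h'
      · -- r + 1 = N + 1
        have hr : r = N := by omega
        subst hr
        rw [qb_diag, Nat.sub_self]
        simp [pt]
      · -- r + 1 ≤ N
        have hrN : r + 1 ≤ N := by omega
        have e1 : N + 1 - (r + 1) = (N - (r+1)) + 1 := by omega
        have e2 : N - r = (N - (r + 1)) + 1 := by omega
        rw [qb_succ, e1, pt_succ, pt_succ]
        have I1 : qb N r * pt r * pt (N - r) = pt N := ih r (by omega)
        have I2 : qb N (r+1) * pt (r+1) * pt (N - (r+1)) = pt N := ih (r+1) hrN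
        rw [e2, pt_succ] at I1
        have hx : (X : PowerSeries ℚ) ^ (2 * (r+1)) * (X : PowerSeries ℚ) ^ (2 * (N - (r+1)) + 2)
            = (X : PowerSeries ℚ) ^ (2 * N + 2) := by
          rw [← pow_add]; congr 1; omega
        rw [pt_succ]
        calc (qb N r + (X:PowerSeries ℚ) ^ (2*(r+1)) * qb N (r+1)) * (pt r * (1 - (X:PowerSeries ℚ)^(2*r+2)))
              * (pt (N - (r+1)) * (1 - (X:PowerSeries ℚ)^(2*(N-(r+1))+2)))
            = (qb N r * pt r * (pt (N - (r+1)) * (1 - (X:PowerSeries ℚ)^(2*(N-(r+1))+2)))) * (1 - (X:PowerSeries ℚ)^(2*r+2))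
              + (X:PowerSeries ℚ)^(2*(r+1)) * (qb N (r+1) * (pt r * (1 - (X:PowerSeries ℚ)^(2*r+2))) * pt (N-(r+1)))
              * (1 - (X:PowerSeries ℚ)^(2*(N-(r+1))+2)) := by ring
          _ = pt N * (1 - (X:PowerSeries ℚ)^(2*r+2))
              + (X:PowerSeries ℚ)^(2*(r+1)) * pt N * (1 - (X:PowerSeries ℚ)^(2*(N-(r+1))+2)) := by
                rw [I1]
                congr 1
                have : pt r * (1 - (X:PowerSeries ℚ)^(2*r+2)) = pt (r+1) := (pt_succ r).symm
                rw [this, I2]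
          _ = pt N * (1 - (X:PowerSeries ℚ)^(2*(r+1)) * (X:PowerSeries ℚ)^(2*(N-(r+1))+2)) := by ring
          _ = pt N * (1 - (X:PowerSeries ℚ)^(2*N+2)) := by rw [hx]

end OPOAux
namespace OPOAux

/-- `qb` extended by zero to integer lower index. -/
def zqb (N : ℕ) (r : ℤ) : PowerSeries ℚ := if 0 ≤ r then qb N r.toNat else 0

lemma zqb_neg {N : ℕ} {r : ℤ} (h : r < 0) : zqb N r = 0 := by
  rw [zqb, if_neg (by omega)]

lemma zqb_of_nonneg {N : ℕ} {r : ℤ} (h : 0 ≤ r) : zqb N r = qb N r.toNat := by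
  rw [zqb, if_pos h]

lemma zqb_overflow {N : ℕ} {r : ℤ} (h : (N : ℤ) < r) : zqb N r = 0 := by
  rw [zqb_of_nonneg (by omega), qb_overflow]
  omega

@[simp] lemma zqb_zero (N : ℕ) : zqb N 0 = 1 := by rw [zqb_of_nonneg le_rfl]; simp

/-- Pascal, first form, valid for all `r : ℤ`. -/
lemma zqb_form1 (N : ℕ) (r : ℤ) :
    zqb (N + 1) r = zqb N (r - 1) + (X : PowerSeries ℚ) ^ (2 * r.toNat) * zqb N r := by
  rcases lt_trichotomy r 0 with h | h | h
  · rw [zqb_neg h, zqb_neg (by omega), zqb_neg h, mul_zero, add_zero]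
  · subst h
    rw [zqb_neg (show (0:ℤ) - 1 < 0 by omega)]
    simp
  · have h1 : r.toNat = (r - 1).toNat + 1 := by omega
    rw [zqb_of_nonneg (by omega), zqb_of_nonneg (by omega), zqb_of_nonneg (by omega), h1, qb_succ]

/-- the ratio identity, natural-number core. -/
lemma ratioNat (a s : ℕ) :
    (1 - (X : PowerSeries ℚ) ^ (2 * (s + 1))) * qb (a + 1 + s) a
      = (1 - (X : PowerSeries ℚ) ^ (2 * (a + 1))) * qb (a + 1 + s) (a + 1) := by
  have hB : pt (a + 1) * pt (s + 1) ≠ 0 := mul_ne_zero (pt_ne_zero _) (pt_ne_zero _)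
  apply mul_right_cancel₀ hB
  have h1 : qb (a + 1 + s) a * pt a * pt (s + 1) = pt (a + 1 + s) := by
    have := qb_pt (a + 1 + s) a (by omega)
    rwa [show a + 1 + s - a = s + 1 by omega] at this
  have h2 : qb (a + 1 + s) (a + 1) * pt (a + 1) * pt s = pt (a + 1 + s) := by
    have := qb_pt (a + 1 + s) (a + 1) (by omega)
    rwa [show a + 1 + s - (a + 1) = s by omega] at this
  have e1 : pt (a + 1) = pt a * (1 - (X : PowerSeries ℚ) ^ (2 * a + 2)) := pt_succ a
  have e2 : pt (s + 1) = pt s * (1 - (X : PowerSeries ℚ) ^ (2 * s + 2)) := pt_succ s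
  have ea : (2 : ℕ) * (a + 1) = 2 * a + 2 := by ring
  have es : (2 : ℕ) * (s + 1) = 2 * s + 2 := by ring
  rw [ea, es]
  calc (1 - (X:PowerSeries ℚ)^(2*s+2)) * qb (a+1+s) a * (pt (a+1) * pt (s+1))
      = ((1 - (X:PowerSeries ℚ)^(2*s+2)) * (1 - (X:PowerSeries ℚ)^(2*a+2)))
          * (qb (a+1+s) a * pt a * pt (s+1)) := by rw [e1]; ring
    _ = ((1 - (X:PowerSeries ℚ)^(2*s+2)) * (1 - (X:PowerSeries ℚ)^(2*a+2))) * pt (a+1+s) := by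
          rw [h1]
    _ = ((1 - (X:PowerSeries ℚ)^(2*a+2)) * (1 - (X:PowerSeries ℚ)^(2*s+2)))
          * (qb (a+1+s) (a+1) * pt (a+1) * pt s) := by rw [h2]; ring
    _ = (1 - (X:PowerSeries ℚ)^(2*a+2)) * qb (a+1+s) (a+1) * (pt (a+1) * pt (s+1)) := by
          rw [e2]; ring

/-- the ratio identity for all integer indices. -/
lemma zqb_ratio (N : ℕ) (r : ℤ) :
    (1 - (X : PowerSeries ℚ) ^ (2 * ((N : ℤ) + 1 - r).toNat)) * zqb N (r - 1)
      = (1 - (X : PowerSeries ℚ) ^ (2 * r.toNat)) * zqb N r := by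
  rcases le_or_gt r 0 with h | h
  · rcases eq_or_lt_of_le h with h' | h'
    · subst h'
      rw [zqb_neg (by omega)]
      simp
    · rw [zqb_neg (by omega), zqb_neg h', mul_zero, mul_zero]
  · rcases le_or_gt r N with h2 | h2
    · -- 1 ≤ r ≤ N
      have ha : ∃ a s : ℕ, r = (a : ℤ) + 1 ∧ N = a + 1 + s := by
        refine ⟨(r - 1).toNat, (N - r.toNat), by omega, by omega⟩
      obtain ⟨a, s, hr, hN⟩ := ha
      subst hN
      have e1 : ((a + 1 + s : ℕ) : ℤ) + 1 - r = (s : ℤ) + 1 := by omega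
      rw [e1, hr]
      rw [zqb_of_nonneg (by omega), zqb_of_nonneg (by omega)]
      have e2 : ((a : ℤ) + 1 - 1).toNat = a := by omega
      have e3 : ((a : ℤ) + 1).toNat = a + 1 := by omega
      have e4 : (((s : ℤ)) + 1).toNat = s + 1 := by omega
      rw [e2, e3, e4]
      exact ratioNat a s
    · rcases eq_or_lt_of_le (show (N : ℤ) + 1 ≤ r by omega) with h3 | h3
      · rw [← h3]
        have : ((N : ℤ) + 1 - ((N : ℤ) + 1)).toNat = 0 := by omega
        rw [this, zqb_overflow (show (N:ℤ) < (N:ℤ)+1 by omega)]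
        simp
      · rw [zqb_overflow (show (N:ℤ) < r - 1 by omega), zqb_overflow (show (N:ℤ) < r by omega),
          mul_zero, mul_zero]

/-- Pascal, second form, valid for all `r : ℤ`. -/
lemma zqb_form2 (N : ℕ) (r : ℤ) :
    zqb (N + 1) r = (X : PowerSeries ℚ) ^ (2 * ((N : ℤ) + 1 - r).toNat) * zqb N (r - 1) + zqb N r := by
  have h1 := zqb_form1 N r
  have h2 := zqb_ratio N r
  linear_combination h1 + h2

/-- auxiliary: merging two exponents against `zqb`. -/
lemma zqb_exp_merge (n : ℕ) (s : ℤ) :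
    (X : PowerSeries ℚ) ^ (2 * (2 * (n:ℤ) + 2 - s).toNat) * ((X : PowerSeries ℚ) ^ (2 * (s - 1).toNat) * zqb (2*n) (s-1))
      = (X : PowerSeries ℚ) ^ (4 * n + 2) * zqb (2*n) (s-1) := by
  by_cases h : 1 ≤ s ∧ s ≤ 2 * (n : ℤ) + 1
  · rw [← mul_assoc, ← pow_add]
    congr 2
    omega
  · have : zqb (2*n) (s - 1) = 0 := by
      rcases (not_and_or.mp h) with h' | h'
      · exact zqb_neg (by omega)
      · exact zqb_overflow (by omega)
    rw [this, mul_zero, mul_zero, mul_zero]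

/-- centered three-term recurrence, valid for all `s : ℤ`. -/
lemma zqb_rec3 (n : ℕ) (s : ℤ) :
    zqb (2 * n + 2) s
      = (1 + (X : PowerSeries ℚ) ^ (4 * n + 2)) * zqb (2*n) (s - 1)
        + (X : PowerSeries ℚ) ^ (2 * s.toNat) * zqb (2*n) s
        + (X : PowerSeries ℚ) ^ (2 * (2 * (n:ℤ) + 2 - s).toNat) * zqb (2*n) (s - 2) := by
  have h1 : zqb (2 * n + 2) s
      = (X : PowerSeries ℚ) ^ (2 * ((2*(n:ℤ)) + 1 + 1 - s).toNat) * zqb (2*n+1) (s - 1)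
        + zqb (2*n+1) s := by
    have h := zqb_form2 (2*n+1) s
    rw [show 2*n+1+1 = 2*n+2 by omega,
      show ((2*n+1:ℕ):ℤ) + 1 - s = (2*(n:ℤ)) + 1 + 1 - s by push_cast; ring] at h
    exact h
  have h2 : zqb (2*n+1) (s - 1)
      = zqb (2*n) (s - 1 - 1) + (X : PowerSeries ℚ) ^ (2 * (s-1).toNat) * zqb (2*n) (s-1) :=
    zqb_form1 (2*n) (s-1)
  have h3 : zqb (2*n+1) s
      = (X : PowerSeries ℚ) ^ (2 * ((2*(n:ℤ)) + 1 - s).toNat) * zqb (2*n) (s - 1) + zqb (2*n) s := by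
    have h := zqb_form2 (2*n) s
    rw [show ((2*n:ℕ):ℤ) + 1 - s = (2*(n:ℤ)) + 1 - s by push_cast; ring] at h
    exact h
  have hm := zqb_exp_merge n s
  have hr := zqb_ratio (2*n) s
  have e0 : ((2*(n:ℤ)) + 1 + 1 - s) = (2*(n:ℤ) + 2 - s) := by ring
  have e1 : s - 1 - 1 = s - 2 := by ring
  have e2 : ((2*(n:ℤ)) + 1 - s) = ((2*n : ℕ) : ℤ) + 1 - s := by push_cast; ring
  rw [h2, e1, e0] at h1
  rw [h3] at h1
  rw [e2] at h1
  rw [h1]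
  linear_combination hm - hr

end OPOAux
namespace OPOAux

def sgn (j : ℤ) : PowerSeries ℚ := C ((-1 : ℚ) ^ j)

lemma sgn_add_one (j : ℤ) : sgn (j + 1) = - sgn j := by
  rw [sgn, sgn, zpow_add₀ (by norm_num : (-1:ℚ) ≠ 0)]
  simp

lemma sgn_add_two (j : ℤ) : sgn (j + 2) = sgn j := by
  rw [show j + 2 = j + 1 + 1 by ring, sgn_add_one, sgn_add_one, neg_neg]

def wS (n : ℕ) (j : ℤ) : PowerSeries ℚ :=
  sgn j * ((X : PowerSeries ℚ) ^ (((j - (n:ℤ))^2).toNat) * zqb (2*n) j)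

def S (n : ℕ) : PowerSeries ℚ := ∑ j ∈ Finset.Icc (0:ℤ) (2*(n:ℤ)), wS n j

lemma sum_shift {β : Type*} [AddCommMonoid β] (lo hi c : ℤ) (f : ℤ → β) :
    ∑ j ∈ Finset.Icc (lo + c) (hi + c), f j = ∑ t ∈ Finset.Icc lo hi, f (t + c) := by
  rw [← Finset.map_add_right_Icc lo hi c, Finset.sum_map]
  simp

/-- The finite Gauss identity. -/
lemma Gfin : ∀ n : ℕ, S n = C ((-1:ℚ)^n) * ∏ k ∈ Finset.range n, (1 - (X:PowerSeries ℚ)^(2*k+1))^2 := by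
  intro n
  induction n with
  | zero => simp [S, wS, sgn]
  | succ n ih =>
    have hcast : ((n+1 : ℕ) : ℤ) = (n:ℤ) + 1 := by push_cast; ring
    have hsplit : S (n+1)
        = (∑ j ∈ Finset.Icc (0:ℤ) (2*(n:ℤ)+2),
            sgn j * ((X:PowerSeries ℚ) ^ (((j - ((n:ℤ)+1))^2).toNat)
              * ((1 + (X:PowerSeries ℚ)^(4*n+2)) * zqb (2*n) (j-1))))
          + (∑ j ∈ Finset.Icc (0:ℤ) (2*(n:ℤ)+2),
            sgn j * ((X:PowerSeries ℚ) ^ (((j - ((n:ℤ)+1))^2).toNat)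
              * ((X:PowerSeries ℚ) ^ (2*j.toNat) * zqb (2*n) j)))
          + (∑ j ∈ Finset.Icc (0:ℤ) (2*(n:ℤ)+2),
            sgn j * ((X:PowerSeries ℚ) ^ (((j - ((n:ℤ)+1))^2).toNat)
              * ((X:PowerSeries ℚ) ^ (2*(2*(n:ℤ)+2-j).toNat) * zqb (2*n) (j-2)))) := by
      rw [S, ← Finset.sum_add_distrib, ← Finset.sum_add_distrib]
      rw [show 2*((n+1:ℕ):ℤ) = 2*(n:ℤ)+2 by push_cast; ring]
      refine Finset.sum_congr rfl fun j hj => ?_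
      rw [wS, hcast, show 2*(n+1) = 2*n+2 by ring, zqb_rec3 n j]
      ring
    -- A-sum
    have hA : (∑ j ∈ Finset.Icc (0:ℤ) (2*(n:ℤ)+2),
            sgn j * ((X:PowerSeries ℚ) ^ (((j - ((n:ℤ)+1))^2).toNat)
              * ((1 + (X:PowerSeries ℚ)^(4*n+2)) * zqb (2*n) (j-1))))
        = ∑ t ∈ Finset.Icc (0:ℤ) (2*(n:ℤ)), -((1 + (X:PowerSeries ℚ)^(4*n+2)) * wS n t) := by
      rw [← Finset.sum_subset (Finset.Icc_subset_Icc (by omega) (by omega) :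
            Finset.Icc (0+1:ℤ) (2*(n:ℤ)+1) ⊆ Finset.Icc (0:ℤ) (2*(n:ℤ)+2))]
      · rw [sum_shift 0 (2*(n:ℤ)) 1]
        refine Finset.sum_congr rfl fun t ht => ?_
        rw [sgn_add_one, show t + 1 - ((n:ℤ)+1) = t - (n:ℤ) by ring,
          show t + 1 - 1 = t by ring, wS]
        ring
      · intro j hj hj'
        simp only [Finset.mem_Icc] at hj hj'
        have : zqb (2*n) (j-1) = 0 := by
          rcases show j - 1 < 0 ∨ (2*(n:ℤ)) < j - 1 by omega with h | h
          · exact zqb_neg h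
          · exact zqb_overflow (by push_cast; omega)
        rw [this]
        ring
    -- B-sum
    have hB : (∑ j ∈ Finset.Icc (0:ℤ) (2*(n:ℤ)+2),
            sgn j * ((X:PowerSeries ℚ) ^ (((j - ((n:ℤ)+1))^2).toNat)
              * ((X:PowerSeries ℚ) ^ (2*j.toNat) * zqb (2*n) j)))
        = ∑ t ∈ Finset.Icc (0:ℤ) (2*(n:ℤ)), (X:PowerSeries ℚ)^(2*n+1) * wS n t := by
      rw [← Finset.sum_subset (Finset.Icc_subset_Icc (by omega) (by omega) :
            Finset.Icc (0:ℤ) (2*(n:ℤ)) ⊆ Finset.Icc (0:ℤ) (2*(n:ℤ)+2))]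
      · refine Finset.sum_congr rfl fun j hj => ?_
        simp only [Finset.mem_Icc] at hj
        have hpow : (X:PowerSeries ℚ) ^ (((j - ((n:ℤ)+1))^2).toNat) * (X:PowerSeries ℚ) ^ (2*j.toNat)
            = (X:PowerSeries ℚ)^(2*n+1) * (X:PowerSeries ℚ) ^ (((j - (n:ℤ))^2).toNat) := by
          rw [← pow_add, ← pow_add]
          congr 1
          have hA0 : 0 ≤ (j - ((n:ℤ)+1))^2 := sq_nonneg _
          have hB0 : 0 ≤ (j - (n:ℤ))^2 := sq_nonneg _
          have hs1 : (j - ((n:ℤ)+1))^2 + 2*j = 2*(n:ℤ)+1 + (j - (n:ℤ))^2 := by ring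
          obtain ⟨A, hA⟩ : ∃ A : ℤ, (j - ((n:ℤ)+1))^2 = A := ⟨_, rfl⟩
          obtain ⟨B, hB⟩ : ∃ B : ℤ, (j - (n:ℤ))^2 = B := ⟨_, rfl⟩
          rw [hA] at hs1 hA0 ⊢
          rw [hB] at hs1 hB0 ⊢
          omega
        rw [wS]
        linear_combination (sgn j * zqb (2*n) j) * hpow
      · intro j hj hj'
        simp only [Finset.mem_Icc] at hj hj'
        rw [zqb_overflow (show (↑(2*n):ℤ) < j by push_cast; omega)]
        ring
    -- C-sum
    have hC : (∑ j ∈ Finset.Icc (0:ℤ) (2*(n:ℤ)+2),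
            sgn j * ((X:PowerSeries ℚ) ^ (((j - ((n:ℤ)+1))^2).toNat)
              * ((X:PowerSeries ℚ) ^ (2*(2*(n:ℤ)+2-j).toNat) * zqb (2*n) (j-2))))
        = ∑ t ∈ Finset.Icc (0:ℤ) (2*(n:ℤ)), (X:PowerSeries ℚ)^(2*n+1) * wS n t := by
      rw [← Finset.sum_subset (Finset.Icc_subset_Icc (by omega) (by omega) :
            Finset.Icc (0+2:ℤ) (2*(n:ℤ)+2) ⊆ Finset.Icc (0:ℤ) (2*(n:ℤ)+2))]
      · rw [sum_shift 0 (2*(n:ℤ)) 2]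
        refine Finset.sum_congr rfl fun t ht => ?_
        simp only [Finset.mem_Icc] at ht
        rw [sgn_add_two, show t + 2 - 2 = t by ring]
        have hpow : (X:PowerSeries ℚ) ^ (((t + 2 - ((n:ℤ)+1))^2).toNat)
              * (X:PowerSeries ℚ) ^ (2*(2*(n:ℤ)+2-(t+2)).toNat)
            = (X:PowerSeries ℚ)^(2*n+1) * (X:PowerSeries ℚ) ^ (((t - (n:ℤ))^2).toNat) := by
          rw [← pow_add, ← pow_add]
          congr 1
          have hA0 : 0 ≤ (t + 2 - ((n:ℤ)+1))^2 := sq_nonneg _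
          have hB0 : 0 ≤ (t - (n:ℤ))^2 := sq_nonneg _
          have hs1 : (t + 2 - ((n:ℤ)+1))^2 + 2*(2*(n:ℤ)+2-(t+2)) = 2*(n:ℤ)+1 + (t - (n:ℤ))^2 := by
            ring
          obtain ⟨A, hA⟩ : ∃ A : ℤ, (t + 2 - ((n:ℤ)+1))^2 = A := ⟨_, rfl⟩
          obtain ⟨B, hB⟩ : ∃ B : ℤ, (t - (n:ℤ))^2 = B := ⟨_, rfl⟩
          rw [hA] at hs1 hA0 ⊢
          rw [hB] at hs1 hB0 ⊢
          omega
        rw [wS]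
        linear_combination (sgn t * zqb (2*n) t) * hpow
      · intro j hj hj'
        simp only [Finset.mem_Icc] at hj hj'
        rw [zqb_neg (show j - 2 < 0 by omega)]
        ring
    rw [hsplit, hA, hB, hC, ← Finset.sum_add_distrib, ← Finset.sum_add_distrib]
    have : ∀ t ∈ Finset.Icc (0:ℤ) (2*(n:ℤ)),
        -((1 + (X:PowerSeries ℚ)^(4*n+2)) * wS n t) + (X:PowerSeries ℚ)^(2*n+1) * wS n t
          + (X:PowerSeries ℚ)^(2*n+1) * wS n t
        = (2*(X:PowerSeries ℚ)^(2*n+1) - 1 - (X:PowerSeries ℚ)^(4*n+2)) * wS n t := by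
      intro t _
      ring
    rw [Finset.sum_congr rfl this, ← Finset.mul_sum, ← S, ih]
    have hx : (X:PowerSeries ℚ)^(2*n+1) * (X:PowerSeries ℚ)^(2*n+1) = (X:PowerSeries ℚ)^(4*n+2) := by
      rw [← pow_add]; congr 1; omega
    have hsgn : C ((-1:ℚ)^(n+1)) = - C ((-1:ℚ)^n) := by
      rw [pow_succ]; simp
    rw [Finset.prod_range_succ, hsgn]
    linear_combination (C ((-1:ℚ)^n) * ∏ k ∈ Finset.range n, (1 - (X:PowerSeries ℚ)^(2*k+1))^2) * hx

end OPOAux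
namespace OPOAux

lemma coeff_eq_of_sub_dvd {s : ℕ} {f g : PowerSeries ℚ} (h : (X:PowerSeries ℚ)^s ∣ f - g)
    {n : ℕ} (hn : n < s) : coeff n f = coeff n g := by
  have h0 := (PowerSeries.X_pow_dvd_iff.mp h) n hn
  rw [map_sub, sub_eq_zero] at h0
  exact h0

lemma dvd_mul_one_sub {s : ℕ} {f g : PowerSeries ℚ} (hf : (X:PowerSeries ℚ)^s ∣ f - 1)
    (hg : (X:PowerSeries ℚ)^s ∣ g - 1) : (X:PowerSeries ℚ)^s ∣ f * g - 1 := by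
  have he : f * g - 1 = f * (g - 1) + (f - 1) := by ring
  rw [he]
  exact dvd_add (hg.mul_left f) hf

lemma dvd_prod_one_sub {s : ℕ} {ι : Type} (t : Finset ι) (F : ι → PowerSeries ℚ)
    (h : ∀ i ∈ t, (X:PowerSeries ℚ)^s ∣ F i - 1) :
    (X:PowerSeries ℚ)^s ∣ (∏ i ∈ t, F i) - 1 := by
  induction t using Finset.cons_induction with
  | empty => simp
  | cons a t ha ih =>
    rw [Finset.prod_cons]
    exact dvd_mul_one_sub (h a (Finset.mem_cons_self a t))
      (ih fun i hi => h i (Finset.mem_cons_of_mem hi))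

/-- admissibility for infinite products -/
def Adm (F : ℕ → PowerSeries ℚ) : Prop := ∀ k, (X:PowerSeries ℚ)^(k+1) ∣ F k - 1

lemma adm_one_sub (c : ℕ → ℕ) (hc : ∀ k, k + 1 ≤ c k) :
    Adm (fun k => 1 - (X:PowerSeries ℚ)^(c k)) := by
  intro k
  have he : (1 - (X:PowerSeries ℚ)^(c k)) - 1 = -((X:PowerSeries ℚ)^(c k)) := by ring
  rw [he]
  exact (dvd_neg).mpr (pow_dvd_pow _ (hc k))

lemma adm_one_add (c : ℕ → ℕ) (hc : ∀ k, k + 1 ≤ c k) :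
    Adm (fun k => 1 + (X:PowerSeries ℚ)^(c k)) := by
  intro k
  have he : (1 + (X:PowerSeries ℚ)^(c k)) - 1 = (X:PowerSeries ℚ)^(c k) := by ring
  rw [he]
  exact pow_dvd_pow _ (hc k)

lemma adm_mul {F G : ℕ → PowerSeries ℚ} (hF : Adm F) (hG : Adm G) :
    Adm (fun k => F k * G k) := fun k => dvd_mul_one_sub (hF k) (hG k)

lemma prod_stable {F : ℕ → PowerSeries ℚ} (hF : Adm F) {n m m' : ℕ} (h1 : n < m) (h2 : m ≤ m') :
    coeff n (∏ k ∈ Finset.range m', F k) = coeff n (∏ k ∈ Finset.range m, F k) := by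
  induction m', h2 using Nat.le_induction with
  | base => rfl
  | succ m' hm ih =>
    rw [Finset.prod_range_succ]
    have hd : (X:PowerSeries ℚ)^(n+1)
        ∣ (∏ k ∈ Finset.range m', F k) * F m' - ∏ k ∈ Finset.range m', F k := by
      have he : (∏ k ∈ Finset.range m', F k) * F m' - ∏ k ∈ Finset.range m', F k
          = (∏ k ∈ Finset.range m', F k) * (F m' - 1) := by ring
      rw [he]
      exact Dvd.dvd.mul_left ((pow_dvd_pow (X:PowerSeries ℚ) (by omega)).trans (hF m')) _
    rw [coeff_eq_of_sub_dvd hd (Nat.lt_succ_self n), ih]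

lemma coeff_iProd {F : ℕ → PowerSeries ℚ} (hF : Adm F) {n m : ℕ} (h : n < m) :
    coeff n (iProd F) = coeff n (∏ k ∈ Finset.range m, F k) := by
  rw [iProd, coeff_mk]
  exact (prod_stable hF (Nat.lt_succ_self n) h).symm

lemma iProd_mul {F G : ℕ → PowerSeries ℚ} (hF : Adm F) (hG : Adm G) :
    iProd F * iProd G = iProd (fun k => F k * G k) := by
  ext n
  rw [PowerSeries.coeff_mul]
  have h1 : ∀ p ∈ Finset.HasAntidiagonal.antidiagonal n,
      coeff p.1 (iProd F) * coeff p.2 (iProd G)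
        = coeff p.1 (∏ k ∈ Finset.range (n+1), F k)
            * coeff p.2 (∏ k ∈ Finset.range (n+1), G k) := by
    intro p hp
    have hmem := Finset.HasAntidiagonal.mem_antidiagonal.mp hp
    rw [coeff_iProd hF (show p.1 < n+1 by omega), coeff_iProd hG (show p.2 < n+1 by omega)]
  rw [Finset.sum_congr rfl h1, ← PowerSeries.coeff_mul, ← Finset.prod_mul_distrib]
  rw [iProd, coeff_mk]

lemma one_sub_X_pow_ne_zero (e : ℕ) (he : 0 < e) : (1 - (X:PowerSeries ℚ)^e) ≠ 0 := by
  intro h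
  have h2 := congrArg (constantCoeff) h
  rw [map_sub, map_one, map_pow, constantCoeff_X, zero_pow (by omega), sub_zero, map_zero] at h2
  exact one_ne_zero h2

lemma pt_add (a b : ℕ) :
    pt (a+b) = pt a * ∏ i ∈ Finset.range b, (1 - (X:PowerSeries ℚ)^(2*(a+i)+2)) := by
  rw [pt, pt]
  exact Finset.prod_range_add _ a b

/-- finite form of Euler's identity, cross-multiplied. -/
lemma finA : ∀ N : ℕ,
    (∏ k ∈ Finset.range N,
        ((1 + (X:PowerSeries ℚ)^(2*k+2)) * ((1 + (X:PowerSeries ℚ)^(2*k+1)) * (1 - (X:PowerSeries ℚ)^(2*k+1)))))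
      * pt N = pt (N+N) := by
  intro N
  induction N with
  | zero => simp [pt]
  | succ N ih =>
    rw [Finset.prod_range_succ, show N+1+(N+1) = ((N+N)+1)+1 by ring, pt_succ, pt_succ, pt_succ]
    linear_combination ((1 + (X:PowerSeries ℚ)^(2*N+2)) * ((1 + (X:PowerSeries ℚ)^(2*N+1))
      * (1 - (X:PowerSeries ℚ)^(2*N+1))) * (1 - (X:PowerSeries ℚ)^(2*N+2))) * ih

/-- Euler's identity, infinite-product form. -/
lemma iProd_tripleA :
    iProd (fun k => (1 + (X:PowerSeries ℚ)^(2*k+2))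
      * ((1 + (X:PowerSeries ℚ)^(2*k+1)) * (1 - (X:PowerSeries ℚ)^(2*k+1)))) = 1 := by
  ext n
  rw [iProd, coeff_mk]
  have h1 : (∏ k ∈ Finset.range (n+1),
        ((1 + (X:PowerSeries ℚ)^(2*k+2)) * ((1 + (X:PowerSeries ℚ)^(2*k+1)) * (1 - (X:PowerSeries ℚ)^(2*k+1)))))
      = ∏ i ∈ Finset.range (n+1), (1 - (X:PowerSeries ℚ)^(2*((n+1)+i)+2)) := by
    apply mul_right_cancel₀ (pt_ne_zero (n+1))
    rw [finA (n+1), pt_add (n+1) (n+1)]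
    ring
  rw [h1]
  have hd : (X:PowerSeries ℚ)^(n+1)
      ∣ (∏ i ∈ Finset.range (n+1), (1 - (X:PowerSeries ℚ)^(2*((n+1)+i)+2))) - 1 := by
    apply dvd_prod_one_sub
    intro i _
    have he : (1 - (X:PowerSeries ℚ)^(2*((n+1)+i)+2)) - 1
        = -((X:PowerSeries ℚ)^(2*((n+1)+i)+2)) := by ring
    rw [he]
    exact (dvd_neg).mpr (pow_dvd_pow _ (by omega))
  exact coeff_eq_of_sub_dvd hd (Nat.lt_succ_self n)

end OPOAux
namespace OPOAux

lemma tail_dvd (a c s : ℕ) (h : s ≤ 2*a+2) :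
    (X:PowerSeries ℚ)^s ∣ (∏ i ∈ Finset.range c, (1 - (X:PowerSeries ℚ)^(2*(a+i)+2))) - 1 := by
  apply dvd_prod_one_sub
  intro i _
  have he : (1 - (X:PowerSeries ℚ)^(2*(a+i)+2)) - 1 = -((X:PowerSeries ℚ)^(2*(a+i)+2)) := by ring
  rw [he]
  exact (dvd_neg).mpr (pow_dvd_pow _ (by omega))

lemma qbW_nat (M r : ℕ) (h : r ≤ 2*M) :
    (X:PowerSeries ℚ)^(2*(min r (2*M - r))+2) ∣ qb (2*M) r * pt M - 1 := by
  rcases le_or_gt r M with hc | hc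
  · -- r ≤ M
    have hkey : qb (2*M) r * pt M
        = (∏ i ∈ Finset.range (M - r), (1 - (X:PowerSeries ℚ)^(2*(r+i)+2)))
          * (∏ i ∈ Finset.range r, (1 - (X:PowerSeries ℚ)^(2*((2*M-r)+i)+2))) := by
      apply mul_right_cancel₀ (mul_ne_zero (pt_ne_zero r) (pt_ne_zero (2*M - r)))
      have hq := qb_pt (2*M) r h
      have hp1 : pt M = pt r * ∏ i ∈ Finset.range (M - r), (1 - (X:PowerSeries ℚ)^(2*(r+i)+2)) := by
        have := pt_add r (M - r); rwa [show r + (M - r) = M by omega] at this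
      have hp2 : pt (2*M) = pt (2*M - r)
          * ∏ i ∈ Finset.range r, (1 - (X:PowerSeries ℚ)^(2*((2*M-r)+i)+2)) := by
        have := pt_add (2*M - r) r; rwa [show (2*M - r) + r = 2*M by omega] at this
      calc qb (2*M) r * pt M * (pt r * pt (2*M - r))
          = (qb (2*M) r * pt r * pt (2*M - r)) * pt M := by ring
        _ = pt (2*M) * pt M := by rw [hq]
        _ = (pt (2*M - r) * ∏ i ∈ Finset.range r, (1 - (X:PowerSeries ℚ)^(2*((2*M-r)+i)+2)))
            * (pt r * ∏ i ∈ Finset.range (M - r), (1 - (X:PowerSeries ℚ)^(2*(r+i)+2))) := by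
              rw [← hp1, ← hp2]
        _ = (∏ i ∈ Finset.range (M - r), (1 - (X:PowerSeries ℚ)^(2*(r+i)+2)))
            * (∏ i ∈ Finset.range r, (1 - (X:PowerSeries ℚ)^(2*((2*M-r)+i)+2)))
            * (pt r * pt (2*M - r)) := by ring
    rw [hkey, show min r (2*M - r) = r by omega]
    exact dvd_mul_one_sub (tail_dvd r (M - r) _ (by omega)) (tail_dvd (2*M - r) r _ (by omega))
  · -- M < r
    have hkey : qb (2*M) r * pt M
        = (∏ i ∈ Finset.range (r - M), (1 - (X:PowerSeries ℚ)^(2*((2*M-r)+i)+2)))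
          * (∏ i ∈ Finset.range (2*M - r), (1 - (X:PowerSeries ℚ)^(2*(r+i)+2))) := by
      apply mul_right_cancel₀ (mul_ne_zero (pt_ne_zero r) (pt_ne_zero (2*M - r)))
      have hq := qb_pt (2*M) r h
      have hp1 : pt M = pt (2*M - r)
          * ∏ i ∈ Finset.range (r - M), (1 - (X:PowerSeries ℚ)^(2*((2*M-r)+i)+2)) := by
        have := pt_add (2*M - r) (r - M); rwa [show (2*M - r) + (r - M) = M by omega] at this
      have hp2 : pt (2*M) = pt r
          * ∏ i ∈ Finset.range (2*M - r), (1 - (X:PowerSeries ℚ)^(2*(r+i)+2)) := by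
        have := pt_add r (2*M - r); rwa [show r + (2*M - r) = 2*M by omega] at this
      calc qb (2*M) r * pt M * (pt r * pt (2*M - r))
          = (qb (2*M) r * pt r * pt (2*M - r)) * pt M := by ring
        _ = pt (2*M) * pt M := by rw [hq]
        _ = (pt r * ∏ i ∈ Finset.range (2*M - r), (1 - (X:PowerSeries ℚ)^(2*(r+i)+2)))
            * (pt (2*M - r) * ∏ i ∈ Finset.range (r - M), (1 - (X:PowerSeries ℚ)^(2*((2*M-r)+i)+2))) := by
              rw [← hp1, ← hp2]
        _ = (∏ i ∈ Finset.range (r - M), (1 - (X:PowerSeries ℚ)^(2*((2*M-r)+i)+2)))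
            * (∏ i ∈ Finset.range (2*M - r), (1 - (X:PowerSeries ℚ)^(2*(r+i)+2)))
            * (pt r * pt (2*M - r)) := by ring
    rw [hkey, show min r (2*M - r) = 2*M - r by omega]
    exact dvd_mul_one_sub (tail_dvd (2*M - r) (r - M) _ (by omega)) (tail_dvd r (2*M - r) _ (by omega))

lemma neg_one_zpow_sub (m : ℕ) (j : ℤ) :
    (-1:ℚ)^(j - ((m:ℤ)+1)) = (-1:ℚ)^(m+1) * (-1:ℚ)^j := by
  rw [zpow_sub₀ (by norm_num : (-1:ℚ) ≠ 0)]
  rw [show ((m:ℤ)+1) = ((m+1 : ℕ) : ℤ) by push_cast; ring, zpow_natCast]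
  rcases neg_one_pow_eq_or ℚ (m+1) with h | h <;> rw [h] <;> norm_num <;> ring

lemma coeff_term (m : ℕ) (j : ℤ) (h0 : 0 ≤ j) (h2 : j ≤ 2*(m:ℤ)+2) :
    coeff m (C ((-1:ℚ)^(m+1)) * (wS (m+1) j * pt (m+1)))
      = if (j - ((m:ℤ)+1))^2 = (m:ℤ) then ((-1:ℚ)^(j-((m:ℤ)+1))) else 0 := by
  have hre : C ((-1:ℚ)^(m+1)) * (wS (m+1) j * pt (m+1))
      = C ((-1:ℚ)^(m+1) * (-1:ℚ)^j)
        * ((X:PowerSeries ℚ)^(((j - ((m+1:ℕ):ℤ))^2).toNat)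
          * (zqb (2*(m+1)) j * pt (m+1))) := by
    rw [wS, sgn, map_mul]
    ring
  rw [hre, PowerSeries.coeff_C_mul]
  have hcast : ((m+1:ℕ):ℤ) = (m:ℤ)+1 := by push_cast; ring
  rw [hcast]
  have hW := qbW_nat (m+1) j.toNat (by omega)
  rw [← zqb_of_nonneg h0] at hW
  have hu1 : j - ((m:ℤ)+1) ≤ (j - ((m:ℤ)+1))^2 := by nlinarith [sq_nonneg (j - ((m:ℤ)+1)), sq_nonneg (j - ((m:ℤ)+1) - 1)]
  have hu2 : -(j - ((m:ℤ)+1)) ≤ (j - ((m:ℤ)+1))^2 := by nlinarith [sq_nonneg (j - ((m:ℤ)+1)), sq_nonneg (j - ((m:ℤ)+1) + 1)]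
  have hA0 : 0 ≤ (j - ((m:ℤ)+1))^2 := sq_nonneg _
  obtain ⟨A, hA⟩ : ∃ A : ℤ, (j - ((m:ℤ)+1))^2 = A := ⟨_, rfl⟩
  rw [hA] at hu1 hu2 hA0 ⊢
  rcases le_or_gt A (m:ℤ) with hcase | hcase
  · -- A ≤ m : the X-power exponent is ≤ m
    have haN : A.toNat ≤ m := by omega
    rw [PowerSeries.coeff_X_pow_mul', if_pos haN]
    have hlt : m - A.toNat < 2*(min j.toNat (2*(m+1) - j.toNat))+2 := by omega
    rw [coeff_eq_of_sub_dvd hW hlt, PowerSeries.coeff_one]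
    by_cases hAm : A = (m:ℤ)
    · rw [if_pos hAm, if_pos (by omega), neg_one_zpow_sub]
      ring
    · rw [if_neg hAm, if_neg (by omega), mul_zero]
  · -- A > m : coefficient vanishes
    rw [PowerSeries.coeff_X_pow_mul', if_neg (by omega), mul_zero, if_neg (by omega)]

/-- the Gauss identity: `thetaSigned = (q;q²)² (q²;q²)`. -/
lemma thetaB : thetaSigned = P₆ * (P₆ * P₄) := by
  have adm6 : Adm (fun k => 1 - (X:PowerSeries ℚ)^(2*k+1)) := adm_one_sub _ (fun k => by omega)
  have adm4 : Adm (fun k => 1 - (X:PowerSeries ℚ)^(2*k+2)) := adm_one_sub _ (fun k => by omega)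
  have h664 : P₆ * (P₆ * P₄)
      = iProd (fun k => (1 - (X:PowerSeries ℚ)^(2*k+1))
          * ((1 - (X:PowerSeries ℚ)^(2*k+1)) * (1 - (X:PowerSeries ℚ)^(2*k+2)))) := by
    rw [P₆, P₄, iProd_mul adm6 adm4, iProd_mul adm6 (adm_mul adm6 adm4)]
  rw [h664]
  ext m
  rw [iProd, coeff_mk]
  have h2 : ∏ k ∈ Finset.range (m+1), ((1 - (X:PowerSeries ℚ)^(2*k+1))
        * ((1 - (X:PowerSeries ℚ)^(2*k+1)) * (1 - (X:PowerSeries ℚ)^(2*k+2))))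
      = (∏ k ∈ Finset.range (m+1), (1 - (X:PowerSeries ℚ)^(2*k+1))^2) * pt (m+1) := by
    rw [pt, ← Finset.prod_mul_distrib]
    exact Finset.prod_congr rfl fun k _ => by ring
  rw [h2]
  have h3 : (∏ k ∈ Finset.range (m+1), (1 - (X:PowerSeries ℚ)^(2*k+1))^2)
      = C ((-1:ℚ)^(m+1)) * S (m+1) := by
    rw [Gfin (m+1), ← mul_assoc, ← map_mul, ← pow_add,
      Even.neg_one_pow (by exact ⟨m+1, by ring⟩), map_one, one_mul]
  rw [h3, mul_assoc, S, Finset.sum_mul, Finset.mul_sum, map_sum]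
  have h4 : ∀ j ∈ Finset.Icc (0:ℤ) (2*((m+1:ℕ):ℤ)),
      coeff m (C ((-1:ℚ)^(m+1)) * (wS (m+1) j * pt (m+1)))
        = (fun t => if t^2 = (m:ℤ) then ((-1:ℚ)^t) else 0) (j - ((m:ℤ)+1)) := by
    intro j hj
    simp only [Finset.mem_Icc] at hj
    exact coeff_term m j hj.1 (by push_cast at hj ⊢; omega)
  rw [Finset.sum_congr rfl h4]
  -- now the theta side
  rw [thetaSigned, coeff_mk]
  have hsupp : Function.support (fun t : ℤ => if t^2 = (m:ℤ) then ((-1:ℚ)^t) else 0)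
      ⊆ ↑(Finset.Icc (-((m:ℤ)+1)) ((m:ℤ)+1)) := by
    intro k hk
    simp only [Function.mem_support] at hk
    have hk2 : k^2 = (m:ℤ) := by
      by_contra hne
      rw [if_neg hne] at hk
      exact hk rfl
    have h1 : k ≤ k^2 := by nlinarith [sq_nonneg k, sq_nonneg (k-1)]
    have h2 : -k ≤ k^2 := by nlinarith [sq_nonneg k, sq_nonneg (k+1)]
    simp only [Finset.coe_Icc, Set.mem_Icc]
    omega
  rw [finsum_eq_sum_of_support_subset _ hsupp]
  have hIcc : Finset.Icc (0:ℤ) (2*((m+1:ℕ):ℤ))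
      = Finset.Icc (-((m:ℤ)+1) + ((m:ℤ)+1)) (((m:ℤ)+1) + ((m:ℤ)+1)) := by
    congr 1 <;> push_cast <;> ring
  rw [hIcc, sum_shift]
  refine (Finset.sum_congr rfl fun t _ => ?_).symm
  rw [show t + ((m:ℤ)+1) - ((m:ℤ)+1) = t by ring]

end OPOAux

open OPOAux in
theorem opo_gf_theta_signed : P₆ * P₅⁻¹ = P₃ * P₄⁻¹ * thetaSigned := by
  have adm6 : Adm (fun k => 1 - (X:PowerSeries ℚ)^(2*k+1)) := adm_one_sub _ (fun k => by omega)
  have adm5 : Adm (fun k => 1 + (X:PowerSeries ℚ)^(2*k+1)) := adm_one_add _ (fun k => by omega)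
  have adm3 : Adm (fun k => 1 + (X:PowerSeries ℚ)^(2*k+2)) := adm_one_add _ (fun k => by omega)
  have hA : P₃ * (P₅ * P₆) = 1 := by
    rw [P₃, P₅, P₆, iProd_mul adm5 adm6, iProd_mul adm3 (adm_mul adm5 adm6)]
    exact iProd_tripleA
  have hT : thetaSigned = P₆ * (P₆ * P₄) := thetaB
  have c5 : constantCoeff P₅ = 1 := by
    have h : coeff 0 P₅ = 1 := by
      rw [P₅, iProd, coeff_mk, Finset.prod_range_one]
      simp
    rwa [PowerSeries.coeff_zero_eq_constantCoeff] at h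
  have c4 : constantCoeff P₄ = 1 := by
    have h : coeff 0 P₄ = 1 := by
      rw [P₄, iProd, coeff_mk, Finset.prod_range_one]
      simp
    rwa [PowerSeries.coeff_zero_eq_constantCoeff] at h
  have h5 : P₅⁻¹ * P₅ = 1 := PowerSeries.inv_mul_cancel _ (by rw [c5]; norm_num)
  have h4 : P₄⁻¹ * P₄ = 1 := PowerSeries.inv_mul_cancel _ (by rw [c4]; norm_num)
  have hP5ne : P₅ ≠ 0 := by
    intro h
    rw [h, map_zero] at c5
    exact zero_ne_one c5
  apply mul_right_cancel₀ hP5ne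
  calc P₆ * P₅⁻¹ * P₅ = P₆ * (P₅⁻¹ * P₅) := by ring
    _ = P₆ := by rw [h5, mul_one]
    _ = P₆ * (P₃ * (P₅ * P₆)) * (P₄⁻¹ * P₄) := by rw [hA, h4]; ring
    _ = P₃ * P₄⁻¹ * (P₆ * (P₆ * P₄)) * P₅ := by ring
    _ = P₃ * P₄⁻¹ * thetaSigned * P₅ := by rw [hT]
end OPOAux
end

section
/- For every positive integer n, \left(\frac{2n}{3} + \frac{1}{8} - \frac{1}{8\sqrt{n+1}}\right)\sqrt{n+1} < \sum_{k=1}^{n} \sqrt{k} < \left(\frac{2n}{3} + \frac{1}{6} - \frac{1}{6\sqrt{n+1}}\right)\sqrt{n+1}. -/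
lemma sqrt_cmp {a b x y : ℝ} (ha : 0 ≤ a) (hb : 0 ≤ b) (hx : 0 ≤ x) (hy : 0 ≤ y)
    (h : a^2 * x < b^2 * y) : a * Real.sqrt x < b * Real.sqrt y := by
  have h2 : (a * Real.sqrt x)^2 < (b * Real.sqrt y)^2 := by
    rw [mul_pow, mul_pow, Real.sq_sqrt hx, Real.sq_sqrt hy]; exact h
  exact lt_of_pow_lt_pow_left₀ 2 (by positivity) h2

lemma sum_sqrt_aux (n : ℕ) (hn : 1 ≤ n) :
    ((2 * n : ℝ) / 3 + 1 / 8) * Real.sqrt (n + 1) - 1 / 8 < ∑ k ∈ Finset.Icc 1 n, Real.sqrt k ∧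
    ∑ k ∈ Finset.Icc 1 n, Real.sqrt k < ((2 * n : ℝ) / 3 + 1 / 6) * Real.sqrt (n + 1) - 1 / 6 := by
  induction n with
  | zero => omega
  | succ m ih =>
    rcases Nat.eq_or_lt_of_le hn with h1 | h1
    · -- base case m+1 = 1
      have hm : m = 0 := by omega
      subst hm
      simp only [Finset.Icc_self, Finset.sum_singleton]
      norm_num
      have hs : Real.sqrt 2 ^ 2 = 2 := Real.sq_sqrt (by norm_num)
      have hp : 0 ≤ Real.sqrt 2 := Real.sqrt_nonneg 2
      constructor
      · nlinarith [hs, hp]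
      · nlinarith [hs, hp]
    · have hm : 1 ≤ m := by omega
      obtain ⟨ihl, ihu⟩ := ih hm
      rw [Finset.sum_Icc_succ_top (by omega : 1 ≤ m + 1)]
      push_cast
      constructor
      · have key : ((2 * ((m:ℝ) + 1)) / 3 + 1 / 8) * Real.sqrt ((m:ℝ) + 1 + 1)
            < ((2 * (m:ℝ)) / 3 + 9 / 8) * Real.sqrt ((m:ℝ) + 1) := by
          apply sqrt_cmp (by positivity) (by positivity) (by positivity) (by positivity)
          nlinarith [Nat.cast_nonneg (α := ℝ) m]
        have : Real.sqrt ((m:ℝ)+1) = Real.sqrt (m+1) := by push_cast; ring_nf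
        nlinarith [key, ihl]
      · have key : ((2 * (m:ℝ)) / 3 + 7 / 6) * Real.sqrt ((m:ℝ) + 1)
            < ((2 * ((m:ℝ) + 1)) / 3 + 1 / 6) * Real.sqrt ((m:ℝ) + 1 + 1) := by
          apply sqrt_cmp (by positivity) (by positivity) (by positivity) (by positivity)
          nlinarith [Nat.cast_nonneg (α := ℝ) m]
        nlinarith [key, ihu]

theorem sum_sqrt_bounds (n : ℕ) (hn : 0 < n) :
    ((2 * n : ℝ) / 3 + 1 / 8 - 1 / (8 * Real.sqrt (n + 1))) * Real.sqrt (n + 1)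
        < ∑ k ∈ Finset.Icc 1 n, Real.sqrt k ∧
      ∑ k ∈ Finset.Icc 1 n, Real.sqrt k
        < ((2 * n : ℝ) / 3 + 1 / 6 - 1 / (6 * Real.sqrt (n + 1))) * Real.sqrt (n + 1) := by
  obtain ⟨hl, hu⟩ := sum_sqrt_aux n hn
  have hs : (0:ℝ) < Real.sqrt (n + 1) := Real.sqrt_pos.mpr (by positivity)
  have h8 : (1 / (8 * Real.sqrt (n+1))) * Real.sqrt (n+1) = 1 / 8 := by
    field_simp
  have h6 : (1 / (6 * Real.sqrt (n+1))) * Real.sqrt (n+1) = 1 / 6 := by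
    field_simp
  constructor
  · calc ((2 * n : ℝ) / 3 + 1 / 8 - 1 / (8 * Real.sqrt (n + 1))) * Real.sqrt (n + 1)
        = ((2 * n : ℝ) / 3 + 1 / 8) * Real.sqrt (n + 1) - 1/8 := by rw [sub_mul, h8]
      _ < _ := hl
  · calc (∑ k ∈ Finset.Icc 1 n, Real.sqrt k)
        < ((2 * n : ℝ) / 3 + 1 / 6) * Real.sqrt (n + 1) - 1/6 := hu
      _ = _ := by rw [sub_mul, h6]
end

section
/- Define M_1(n) = \sum_{k=1}^{n} \lfloor\sqrt{k}\rfloor and M_2(4n) = 2n + 1 + 2\lfloor\sqrt{n}\rfloor + \sum_{k=1}^{n}\lceil\sqrt{k}\rceil + \sum_{k=1}^{2n}\lfloor\sqrt{k}\rfloor. Then \lim_{n\to\infty} M_2(4n)/M_1(4n) = 1/8 + \sqrt{1/8}. -/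
open Finset Filter

lemma sqrtSum_bounds (n : ℕ) :
    2/3*(n:ℝ)*Real.sqrt n ≤ (∑ k ∈ Finset.Icc 1 n, Real.sqrt k) ∧
    (∑ k ∈ Finset.Icc 1 n, Real.sqrt k) ≤ 2/3*(n:ℝ)*Real.sqrt n + n := by
  induction n with
  | zero => simp
  | succ n ih =>
    rw [Finset.sum_Icc_succ_top (Nat.one_le_iff_ne_zero.2 (Nat.succ_ne_zero n))]
    set sa := Real.sqrt (n+1) with hsa
    set sb := Real.sqrt n with hsb
    have hb : 0 ≤ sb := Real.sqrt_nonneg _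
    have hab : sb ≤ sa := Real.sqrt_le_sqrt (by push_cast; linarith)
    have ha1 : 1 ≤ sa := by
      rw [hsa, show ((n:ℝ)+1) = ((n+1:ℕ):ℝ) by push_cast; ring]
      rw [show (1:ℝ) = Real.sqrt 1 by simp]
      exact Real.sqrt_le_sqrt (by push_cast; linarith)
    have hsq : sa^2 = sb^2 + 1 := by
      rw [hsa, hsb, Real.sq_sqrt (by positivity), Real.sq_sqrt (by positivity)]
    have key1 : 2/3*sa^3 - 2/3*sb^3 ≤ sa := by
      nlinarith [mul_nonneg (mul_nonneg (sub_nonneg.2 hab) (sub_nonneg.2 hab))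
        (by linarith : (0:ℝ) ≤ sa + 2*sb)]
    have key2 : sa ≤ 2/3*sa^3 - 2/3*sb^3 + 1 := by
      nlinarith [mul_nonneg (mul_nonneg (sub_nonneg.2 hab) (sub_nonneg.2 hab))
        (by linarith : (0:ℝ) ≤ 2*sa + sb)]
    have e1 : 2/3*((n:ℝ)+1)*sa = 2/3*sa^3 := by
      have : sa^2 = (n:ℝ)+1 := Real.sq_sqrt (by positivity)
      nlinarith [this]
    have e2 : 2/3*(n:ℝ)*sb = 2/3*sb^3 := by
      have : sb^2 = (n:ℝ) := Real.sq_sqrt (by positivity)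
      nlinarith [this]
    obtain ⟨ihl, ihr⟩ := ih
    push_cast
    constructor
    · have : Real.sqrt ((n:ℝ)+1) = sa := by rw [hsa]
      rw [this]; nlinarith [ihl]
    · have : Real.sqrt ((n:ℝ)+1) = sa := by rw [hsa]
      rw [this]; nlinarith [ihr]

lemma floorSum_bounds (n : ℕ) :
    2/3*(n:ℝ)*Real.sqrt n - n ≤ (∑ k ∈ Finset.Icc 1 n, (⌊Real.sqrt k⌋₊:ℝ)) ∧
    (∑ k ∈ Finset.Icc 1 n, (⌊Real.sqrt k⌋₊:ℝ)) ≤ 2/3*(n:ℝ)*Real.sqrt n + n := by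
  obtain ⟨h1, h2⟩ := sqrtSum_bounds n
  have card : (Finset.Icc 1 n).card = n := by rw [Nat.card_Icc]; omega
  have lo : (∑ k ∈ Finset.Icc 1 n, Real.sqrt k) - n ≤ ∑ k ∈ Finset.Icc 1 n, (⌊Real.sqrt k⌋₊:ℝ) := by
    have : ∑ k ∈ Finset.Icc 1 n, (Real.sqrt k - 1) ≤ ∑ k ∈ Finset.Icc 1 n, (⌊Real.sqrt k⌋₊:ℝ) := by
      apply Finset.sum_le_sum
      intro k hk
      have := Nat.lt_floor_add_one (Real.sqrt k)
      linarith
    rw [Finset.sum_sub_distrib, Finset.sum_const, card] at this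
    simpa using this
  have hi : (∑ k ∈ Finset.Icc 1 n, (⌊Real.sqrt k⌋₊:ℝ)) ≤ ∑ k ∈ Finset.Icc 1 n, Real.sqrt k :=
    Finset.sum_le_sum fun k _ => Nat.floor_le (Real.sqrt_nonneg _)
  constructor <;> linarith

lemma ceilSum_bounds (n : ℕ) :
    2/3*(n:ℝ)*Real.sqrt n - n ≤ (∑ k ∈ Finset.Icc 1 n, (⌈Real.sqrt k⌉₊:ℝ)) ∧
    (∑ k ∈ Finset.Icc 1 n, (⌈Real.sqrt k⌉₊:ℝ)) ≤ 2/3*(n:ℝ)*Real.sqrt n + 2*n := by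
  obtain ⟨h1, h2⟩ := sqrtSum_bounds n
  have card : (Finset.Icc 1 n).card = n := by rw [Nat.card_Icc]; omega
  have lo : (∑ k ∈ Finset.Icc 1 n, Real.sqrt k) ≤ ∑ k ∈ Finset.Icc 1 n, (⌈Real.sqrt k⌉₊:ℝ) :=
    Finset.sum_le_sum fun k _ => Nat.le_ceil _
  have hi : (∑ k ∈ Finset.Icc 1 n, (⌈Real.sqrt k⌉₊:ℝ)) ≤ (∑ k ∈ Finset.Icc 1 n, Real.sqrt k) + n := by
    have : (∑ k ∈ Finset.Icc 1 n, (⌈Real.sqrt k⌉₊:ℝ)) ≤ ∑ k ∈ Finset.Icc 1 n, (Real.sqrt k + 1) := by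
      apply Finset.sum_le_sum
      intro k hk
      have := Nat.ceil_lt_add_one (Real.sqrt_nonneg (k:ℝ))
      linarith
    rw [Finset.sum_add_distrib, Finset.sum_const, card] at this
    simpa using this
  constructor <;> linarith

lemma tendsto_div_nsqrt (f : ℕ → ℝ) (c C : ℝ)
    (h : ∀ n : ℕ, 1 ≤ n → |f n - c * ((n:ℝ) * Real.sqrt n)| ≤ C * n) :
    Tendsto (fun n : ℕ => f n / ((n:ℝ) * Real.sqrt n)) atTop (nhds c) := by
  have hs : Tendsto (fun n:ℕ => Real.sqrt n) atTop atTop := by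
    have h' : Tendsto Real.sqrt atTop atTop := by
      apply tendsto_atTop_atTop.2
      intro b
      refine ⟨b^2, fun a ha => ?_⟩
      calc b ≤ |b| := le_abs_self b
      _ = Real.sqrt (b^2) := (Real.sqrt_sq_eq_abs b).symm
      _ ≤ Real.sqrt a := Real.sqrt_le_sqrt ha
    exact h'.comp tendsto_natCast_atTop_atTop
  have h0 : Tendsto (fun n:ℕ => C / Real.sqrt n) atTop (nhds 0) :=
    Tendsto.div_atTop tendsto_const_nhds hs
  have key : Tendsto (fun n:ℕ => f n / ((n:ℝ) * Real.sqrt n) - c) atTop (nhds 0) := by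
    refine squeeze_zero_norm' ?_ h0
    filter_upwards [eventually_ge_atTop 1] with n hn
    have hn0 : (0:ℝ) < n := by exact_mod_cast hn
    have hs0 : (0:ℝ) < Real.sqrt n := Real.sqrt_pos.2 hn0
    have hN : (0:ℝ) < (n:ℝ) * Real.sqrt n := by positivity
    rw [Real.norm_eq_abs, show f n / ((n:ℝ) * Real.sqrt n) - c
        = (f n - c * ((n:ℝ) * Real.sqrt n)) / ((n:ℝ) * Real.sqrt n) by field_simp,
      abs_div, abs_of_pos hN, div_le_div_iff₀ hN hs0]
    calc |f n - c * ((n:ℝ) * Real.sqrt n)| * Real.sqrt n ≤ (C * n) * Real.sqrt n :=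
          mul_le_mul_of_nonneg_right (h n hn) hs0.le
      _ = C * ((n:ℝ) * Real.sqrt n) := by ring
  have := key.add (tendsto_const_nhds (x := c))
  simpa using this

/-- The number of terms used by the linear recurrence to compute `p̄(n)`. -/
noncomputable def M₁ (n : ℕ) : ℕ := ∑ k ∈ Finset.Icc 1 n, ⌊Real.sqrt k⌋₊

/-- The number of terms used by the nonlinear recurrence to compute `p̄(4n)`. -/
noncomputable def M₂four (n : ℕ) : ℕ :=
  2 * n + 1 + 2 * ⌊Real.sqrt n⌋₊ + ∑ k ∈ Finset.Icc 1 n, ⌈Real.sqrt k⌉₊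
    + ∑ k ∈ Finset.Icc 1 (2 * n), ⌊Real.sqrt k⌋₊

lemma sqrt_le_self_nat (n : ℕ) (hn : 1 ≤ n) : Real.sqrt n ≤ n := by
  have hn1 : (1:ℝ) ≤ n := by exact_mod_cast hn
  nlinarith [Real.sq_sqrt (by linarith : (0:ℝ) ≤ (n:ℝ)), Real.sqrt_nonneg (n:ℝ),
    sq_nonneg (Real.sqrt n - 1)]

lemma M2_bound (n : ℕ) (hn : 1 ≤ n) :
    |(M₂four n : ℝ) - (2/3 + 4/3*Real.sqrt 2) * ((n:ℝ) * Real.sqrt n)| ≤ 9 * n := by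
  have hn1 : (1:ℝ) ≤ n := by exact_mod_cast hn
  have hfloor : (⌊Real.sqrt n⌋₊ : ℝ) ≤ n :=
    le_trans (Nat.floor_le (Real.sqrt_nonneg _)) (sqrt_le_self_nat n hn)
  obtain ⟨c1, c2⟩ := ceilSum_bounds n
  obtain ⟨f1, f2⟩ := floorSum_bounds (2*n)
  have h2n : ((2*n : ℕ) : ℝ) = 2*(n:ℝ) := by push_cast; ring
  have hs2n : Real.sqrt (2*(n:ℝ)) = Real.sqrt 2 * Real.sqrt n :=
    Real.sqrt_mul (by norm_num : (0:ℝ) ≤ 2) n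
  rw [h2n, hs2n] at f1 f2
  have hcast : (M₂four n : ℝ) = 2*(n:ℝ) + 1 + 2*(⌊Real.sqrt n⌋₊ : ℝ)
      + (∑ k ∈ Finset.Icc 1 n, (⌈Real.sqrt k⌉₊:ℝ))
      + (∑ k ∈ Finset.Icc 1 (2*n), (⌊Real.sqrt k⌋₊:ℝ)) := by
    simp [M₂four]
  rw [hcast, abs_le]
  have hfl0 : (0:ℝ) ≤ (⌊Real.sqrt n⌋₊ : ℝ) := Nat.cast_nonneg _
  constructor <;> linarith

lemma M1_bound (n : ℕ) (hn : 1 ≤ n) :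
    |(M₁ (4*n) : ℝ) - (16/3) * ((n:ℝ) * Real.sqrt n)| ≤ 4 * n := by
  obtain ⟨f1, f2⟩ := floorSum_bounds (4*n)
  have h4n : ((4*n : ℕ) : ℝ) = 4*(n:ℝ) := by push_cast; ring
  have hs4n : Real.sqrt (4*(n:ℝ)) = 2 * Real.sqrt n := by
    rw [Real.sqrt_mul (by norm_num : (0:ℝ) ≤ 4),
      show (4:ℝ) = 2^2 by norm_num, Real.sqrt_sq (by norm_num : (0:ℝ) ≤ 2)]
  rw [h4n, hs4n] at f1 f2
  have hcast : (M₁ (4*n) : ℝ) = ∑ k ∈ Finset.Icc 1 (4*n), (⌊Real.sqrt k⌋₊:ℝ) := by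
    simp [M₁]
  rw [hcast, abs_le]
  constructor <;> linarith

theorem M2_div_M1_tendsto :
    Tendsto (fun n : ℕ => (M₂four n : ℝ) / (M₁ (4 * n) : ℝ)) atTop
      (nhds (1 / 8 + Real.sqrt (1 / 8))) := by
  have b2 : Tendsto (fun n:ℕ => (M₂four n : ℝ) / ((n:ℝ) * Real.sqrt n)) atTop
      (nhds (2/3 + 4/3*Real.sqrt 2)) := tendsto_div_nsqrt _ _ 9 M2_bound
  have b1 : Tendsto (fun n:ℕ => (M₁ (4*n) : ℝ) / ((n:ℝ) * Real.sqrt n)) atTop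
      (nhds (16/3)) := tendsto_div_nsqrt _ _ 4 M1_bound
  have hdiv := b2.div b1 (by norm_num : (16:ℝ)/3 ≠ 0)
  have h8 : Real.sqrt (1/8) = Real.sqrt 2 / 4 := by
    rw [show (1/8:ℝ) = (Real.sqrt 2/4)^2 by
        rw [div_pow, Real.sq_sqrt (by norm_num : (0:ℝ) ≤ 2)]; norm_num]
    exact Real.sqrt_sq (by positivity)
  have heq : (2/3 + 4/3*Real.sqrt 2)/(16/3) = 1/8 + Real.sqrt (1/8) := by
    rw [h8]; ring
  rw [← heq]
  refine Tendsto.congr' ?_ hdiv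
  filter_upwards [eventually_ge_atTop 1] with n hn
  have hn0 : (0:ℝ) < n := by exact_mod_cast hn
  have hN : ((n:ℝ) * Real.sqrt n) ≠ 0 := by positivity
  simp only [Pi.div_apply]
  rw [div_div_div_cancel_right₀]
  exact hN
end
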